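/- Single contraction of the integrability condition (equation (9), flat space). Let n ≥ 4, and let W_{abcd} (twice continuously differentiable) and L_{abc} (three times continuously differentiable, with L_{abc} = L_{[ab]c} and L_{ab}^{b} = 0) be tensor fields on flat ℝⁿ satisfying equation (5), with W additionally satisfying W_{abcd} = W_{[ab]cd} = W_{ab[cd]}, W_{abcd} = W_{cdab} and W^a_{bad} = 0. Then W^{[ab}_{[cd;i]}^{i]} = −(4(n−4)/(9(n−2))) ( L^{[a|i|}_{[c;|i|d]}^{b]} + L_{[c}^{i[a}_{;|i|d]}^{b]} ) − (4/(9(n−3))) δ^{[a}_{[c} W^{b]i}_{d]j;i}^{j}. -/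

import Mathlib

open scoped ContDiff

noncomputable section

/-- Partial derivative `∂ᵢ f` of a scalar field on flat `ℝⁿ` (points represented as
`Fin n → ℝ`, standard coordinates) in the `i`-th coordinate direction.  In Cartesian
coordinates on flat space this is the covariant derivative `;i`. -/
def pd {n : ℕ} (i : Fin n) (f : (Fin n → ℝ) → ℝ) : (Fin n → ℝ) → ℝ :=
  fun x => fderiv ℝ f x (Pi.single i 1)

/-- Components `η_{ab}` of the constant diagonal metric with diagonal entries `η a = ±1`;
since the entries are `±1` these coincide with the components `η^{ab}` of the inverse
metric. -/
def gm {n : ℕ} (η : Fin n → ℝ) (a b : Fin n) : ℝ := if a = b then η a else 0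

/-- Antisymmetrization over two index slots. -/
def asym2 {n : ℕ} (T : Fin n → Fin n → ℝ) (a b : Fin n) : ℝ := (T a b - T b a) / 2

/-- Antisymmetrization over three index slots. -/
def asym3 {n : ℕ} (T : Fin n → Fin n → Fin n → ℝ) (a b c : Fin n) : ℝ :=
  (T a b c - T a c b - T b a c + T b c a + T c a b - T c b a) / 6

/-- Simultaneous antisymmetrization over a pair of upper slots and a pair of lower slots. -/
def asym22 {n : ℕ} (T : Fin n → Fin n → Fin n → Fin n → ℝ) (a b c d : Fin n) : ℝ :=
  (T a b c d - T b a c d - T a b d c + T b a d c) / 4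

/-- Simultaneous antisymmetrization over a triple of upper slots and a triple of lower
slots (arguments ordered as `T upper₁ upper₂ upper₃ lower₁ lower₂ lower₃`). -/
def asym33 {n : ℕ} (T : Fin n → Fin n → Fin n → Fin n → Fin n → Fin n → ℝ)
    (a b f c d e : Fin n) : ℝ :=
  asym3 (fun a b f => asym3 (fun c d e => T a b f c d e) c d e) a b f

/-- A Weyl candidate: a 4-tensor field with the index symmetries (3a)–(3d):
antisymmetry in the first and in the second index pair, symmetry under interchange of the
two pairs, vanishing cyclic sum `W_{a[bcd]} = 0`, and vanishing trace `W^a{}_{bad} = 0`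
(the trace being taken with the metric `η`). -/
def WeylCandidate {n : ℕ} (η : Fin n → ℝ)
    (W : (Fin n → ℝ) → Fin n → Fin n → Fin n → Fin n → ℝ) : Prop :=
  (∀ x a b c d, W x a b c d = - W x b a c d) ∧
  (∀ x a b c d, W x a b c d = - W x a b d c) ∧
  (∀ x a b c d, W x a b c d = W x c d a b) ∧
  (∀ x a b c d, asym3 (fun b c d => W x a b c d) b c d = 0) ∧
  (∀ x b d, ∑ a, η a * W x a b a d = 0)

/-- The right-hand side of the Lanczos potential equation (4), in the equivalent fully
lowered form (the free indices `a b`, raised in the paper, are lowered with the invertible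
diagonal metric `η`, which only multiplies each component equation by `η a * η b ≠ 0`).
Each contracted (dummy) index pair carries a factor `η i` coming from the inverse
metric. -/
def rhs4 {n : ℕ} (η : Fin n → ℝ) (L : (Fin n → ℝ) → Fin n → Fin n → Fin n → ℝ)
    (x : Fin n → ℝ) (a b c d : Fin n) : ℝ :=
  -- 2 L^{ab}{}_{[c;d]}
  (pd d (L · a b c) x - pd c (L · a b d) x)
  -- + 2 L_{cd}{}^{[a;b]}
  + (pd b (L · c d a) x - pd a (L · c d b) x)
  -- − (4/(n−2)) δ^{[a}_{[c} ( L^{b]i}{}_{d];i} − L^{b]i}{}_{|i|;d]} + L_{d]i}{}^{b];i} − L_{d]i}{}^{|i|;b]} )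
  - (4 / ((n : ℝ) - 2)) *
      asym22 (fun a b c d =>
        gm η a c *
          ∑ i, η i *
            (pd i (L · b i d) x - pd d (L · b i i) x
              + pd i (L · d i b) x - pd b (L · d i i) x)) a b c d
  -- + (8/((n−2)(n−1))) δ^{a}_{[c} δ^{b}_{d]} L^{ij}{}_{i;j}
  + (8 / (((n : ℝ) - 2) * ((n : ℝ) - 1))) *
      ((gm η a c * gm η b d - gm η a d * gm η b c) / 2) *
      ∑ i, ∑ j, η i * η j * pd j (L · i j i) x

/-- Equation (4): `L` is a Lanczos potential for `W` (fully lowered, equivalent form). -/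
def Eq4 {n : ℕ} (η : Fin n → ℝ)
    (W : (Fin n → ℝ) → Fin n → Fin n → Fin n → Fin n → ℝ)
    (L : (Fin n → ℝ) → Fin n → Fin n → Fin n → ℝ) : Prop :=
  ∀ x a b c d, W x a b c d = rhs4 η L x a b c d

/-- The right-hand side of equation (5) (equation (4) in the Lanczos algebraic gauge
`L_{ab}{}^b = 0`), fully lowered form:
`2 L^{ab}{}_{[c;d]} + 2 L_{cd}{}^{[a;b]} − (4/(n−2)) δ^{[a}_{[c} ( L^{b]i}{}_{d];i} + L_{d]i}{}^{b];i} )`. -/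
def rhs5 {n : ℕ} (η : Fin n → ℝ) (L : (Fin n → ℝ) → Fin n → Fin n → Fin n → ℝ)
    (x : Fin n → ℝ) (a b c d : Fin n) : ℝ :=
  (pd d (L · a b c) x - pd c (L · a b d) x)
  + (pd b (L · c d a) x - pd a (L · c d b) x)
  - (4 / ((n : ℝ) - 2)) *
      asym22 (fun a b c d =>
        gm η a c * ∑ i, η i * (pd i (L · b i d) x + pd i (L · d i b) x)) a b c d

/-- Equation (5). -/
def Eq5 {n : ℕ} (η : Fin n → ℝ)
    (W : (Fin n → ℝ) → Fin n → Fin n → Fin n → Fin n → ℝ)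
    (L : (Fin n → ℝ) → Fin n → Fin n → Fin n → ℝ) : Prop :=
  ∀ x a b c d, W x a b c d = rhs5 η L x a b c d

/-- Constraint (8), fully lowered form:
`W^{[ab}{}_{[cd;e]}{}^{f]} = (1/(n−4)) δ^{[a}_{[c} W^{bf]}{}_{de];i}{}^{i}
 + (2/(n−4)) δ^{[a}_{[c} W^{|i|b}{}_{de];i}{}^{f]} + (2/(n−4)) δ^{[a}_{[c} W^{bf]}{}_{|i|d;e]}{}^{i}
 + (4/((n−3)(n−4))) δ^{[a}_{[c} δ^{b}_{d} W^{f]i}{}_{e]j;i}{}^{j}`. -/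
def Constraint8 {n : ℕ} (η : Fin n → ℝ)
    (W : (Fin n → ℝ) → Fin n → Fin n → Fin n → Fin n → ℝ) : Prop :=
  ∀ x a b f c d e,
    asym33 (fun a b f c d e => pd f (pd e (W · a b c d)) x) a b f c d e =
      (1 / ((n : ℝ) - 4)) *
          asym33 (fun a b f c d e =>
            gm η a c * ∑ i, η i * pd i (pd i (W · b f d e)) x) a b f c d e
      + (2 / ((n : ℝ) - 4)) *
          asym33 (fun a b f c d e =>
            gm η a c * ∑ i, η i * pd f (pd i (W · i b d e)) x) a b f c d e
      + (2 / ((n : ℝ) - 4)) *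
          asym33 (fun a b f c d e =>
            gm η a c * ∑ i, η i * pd i (pd e (W · b f i d)) x) a b f c d e
      + (4 / (((n : ℝ) - 3) * ((n : ℝ) - 4))) *
          asym33 (fun a b f c d e =>
            gm η a c * gm η b d *
              ∑ i, ∑ j, η i * η j * pd j (pd i (W · f i e j)) x) a b f c d e

/-- Constraint (10), fully lowered form:
`W^{[ab}{}_{cd;i}{}^{|i|e]} + 2 W^{[ab}{}_{i[c;d]}{}^{|i|e]}
 + (4/(n−3)) δ^{[a}_{[c} W^{b|i}{}_{d]j;i}{}^{j|e]} = 0`,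
antisymmetrized over the upper indices `a b e` and (where indicated) the lower indices
`c d`. -/
def Constraint10 {n : ℕ} (η : Fin n → ℝ)
    (W : (Fin n → ℝ) → Fin n → Fin n → Fin n → Fin n → ℝ) : Prop :=
  ∀ x a b e c d,
    asym3 (fun a b e =>
      (∑ i, η i * pd e (pd i (pd i (W · a b c d))) x)
      + 2 * asym2 (fun c d =>
            ∑ i, η i * pd e (pd i (pd d (W · a b i c))) x) c d
      + (4 / ((n : ℝ) - 3)) * asym2 (fun c d =>
            gm η a c *
              ∑ i, ∑ j, η i * η j * pd e (pd j (pd i (W · b i d j))) x) c d) a b e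
    = 0

section helpers
variable {n : ℕ} {η : Fin n → ℝ}

lemma gm_comm (η : Fin n → ℝ) (a b : Fin n) : gm η a b = gm η b a := by
  unfold gm
  rcases eq_or_ne a b with h | h
  · subst h; rfl
  · simp [h, h.symm]

lemma eta_sq (hη : ∀ i, η i = 1 ∨ η i = -1) (i : Fin n) : η i * η i = 1 := by
  rcases hη i with h | h <;> rw [h] <;> norm_num

lemma col1 (hη : ∀ i, η i = 1 ∨ η i = -1) (p : Fin n) (g : Fin n → ℝ) :
    ∑ i, η i * (gm η p i * g i) = g p := by
  rw [Fintype.sum_eq_single p]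
  · simp only [gm, eq_self_iff_true, if_true]
    rw [← mul_assoc, eta_sq hη p, one_mul]
  · intro i hi
    simp [gm, (Ne.symm hi : p ≠ i)]

lemma diagsum (hη : ∀ i, η i = 1 ∨ η i = -1) (c : ℝ) :
    ∑ i : Fin n, η i * (gm η i i * c) = n * c := by
  have h : ∀ i : Fin n, η i * (gm η i i * c) = c := fun i => by
    simp only [gm, eq_self_iff_true, if_true]
    rw [← mul_assoc, eta_sq hη i, one_mul]
  rw [Finset.sum_congr rfl fun i _ => h i]
  simp [Finset.sum_const, mul_comm]

lemma swap_sum (η : Fin n → ℝ) (g : Fin n → Fin n → ℝ) :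
    ∑ i, η i * ∑ j, η j * g i j = ∑ j, η j * ∑ i, η i * g i j := by
  calc ∑ i, η i * ∑ j, η j * g i j = ∑ i, ∑ j, η i * (η j * g i j) := by
        simp only [Finset.mul_sum]
    _ = ∑ j, ∑ i, η i * (η j * g i j) := Finset.sum_comm
    _ = ∑ j, η j * ∑ i, η i * g i j := by
        refine Finset.sum_congr rfl fun j _ => ?_
        rw [Finset.mul_sum]
        exact Finset.sum_congr rfl fun i _ => by ring

lemma sum_eta_const (c : ℝ) : ∑ _i : Fin n, c = n * c := by
  simp [Finset.sum_const, mul_comm]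

end helpers

section pdlemmas
variable {n : ℕ}

lemma contDiff_pd_two {f : (Fin n → ℝ) → ℝ} (hf : ContDiff ℝ 3 f) (i : Fin n) :
    ContDiff ℝ 2 (pd i f) :=
  (hf.fderiv_right (by norm_num)).clm_apply contDiff_const

lemma contDiff_pd_one {f : (Fin n → ℝ) → ℝ} (hf : ContDiff ℝ 2 f) (i : Fin n) :
    ContDiff ℝ 1 (pd i f) :=
  (hf.fderiv_right (by norm_num)).clm_apply contDiff_const

lemma pd_neg (i : Fin n) (f : (Fin n → ℝ) → ℝ) (x) :
    pd i (fun y => -f y) x = - pd i f x := by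
  simp [pd, fderiv_neg]

lemma pd_comm {f : (Fin n → ℝ) → ℝ} (hf : ContDiff ℝ 2 f) (i j : Fin n) (x) :
    pd i (pd j f) x = pd j (pd i f) x := by
  have hsymm : IsSymmSndFDerivAt ℝ f x :=
    hf.contDiffAt.isSymmSndFDerivAt (by norm_num)
  have hdf : DifferentiableAt ℝ (fderiv ℝ f) x :=
    ((hf.fderiv_right (by norm_num : (1:WithTop ℕ∞) + 1 ≤ 2)).differentiable (by norm_num)).differentiableAt
  have key : ∀ v w : Fin n → ℝ,
      fderiv ℝ (fun y => fderiv ℝ f y v) x w = fderiv ℝ (fderiv ℝ f) x w v := by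
    intro v w
    rw [show (fun y => fderiv ℝ f y v) = fun y => (fderiv ℝ f y) v from rfl,
      fderiv_clm_apply hdf (differentiableAt_const v)]
    simp
  show fderiv ℝ (fun y => fderiv ℝ f y (Pi.single j 1)) x (Pi.single i 1)
      = fderiv ℝ (fun y => fderiv ℝ f y (Pi.single i 1)) x (Pi.single j 1)
  rw [key, key, hsymm.eq]

lemma pd_sum_mul (η : Fin n → ℝ) (i : Fin n) (x) {f : Fin n → (Fin n → ℝ) → ℝ}
    (hf : ∀ j, DifferentiableAt ℝ (f j) x) :
    pd i (fun y => ∑ j, η j * f j y) x = ∑ j, η j * pd i (f j) x := by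
  have h : pd i (fun y => ∑ j, η j * f j y) x = ∑ j, pd i (fun y => η j * f j y) x := by
    simp [pd, fderiv_fun_sum (fun j _ => ((hf j).const_mul (η j)))]
  rw [h]
  refine Finset.sum_congr rfl fun j _ => ?_
  simp [pd, fderiv_const_mul (hf j) (η j)]

lemma pd_comb (i : Fin n) (x : Fin n → ℝ) (c g1 g2 g3 g4 : ℝ)
    {A1 A2 A3 A4 B1 B2 B3 B4 : (Fin n → ℝ) → ℝ}
    (hA1 : DifferentiableAt ℝ A1 x) (hA2 : DifferentiableAt ℝ A2 x)
    (hA3 : DifferentiableAt ℝ A3 x) (hA4 : DifferentiableAt ℝ A4 x)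
    (hB1 : DifferentiableAt ℝ B1 x) (hB2 : DifferentiableAt ℝ B2 x)
    (hB3 : DifferentiableAt ℝ B3 x) (hB4 : DifferentiableAt ℝ B4 x) :
    pd i (fun y => A1 y - A2 y + (A3 y - A4 y)
        - c * (g1 * B1 y - g2 * B2 y - g3 * B3 y + g4 * B4 y)) x
      = pd i A1 x - pd i A2 x + (pd i A3 x - pd i A4 x)
        - c * (g1 * pd i B1 x - g2 * pd i B2 x - g3 * pd i B3 x + g4 * pd i B4 x) := by
  have H : HasFDerivAt (fun y => A1 y - A2 y + (A3 y - A4 y)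
        - c * (g1 * B1 y - g2 * B2 y - g3 * B3 y + g4 * B4 y))
      ((fderiv ℝ A1 x - fderiv ℝ A2 x + (fderiv ℝ A3 x - fderiv ℝ A4 x))
        - c • (g1 • fderiv ℝ B1 x - g2 • fderiv ℝ B2 x - g3 • fderiv ℝ B3 x
            + g4 • fderiv ℝ B4 x)) x := by
    exact ((hA1.hasFDerivAt.sub hA2.hasFDerivAt).add
        (hA3.hasFDerivAt.sub hA4.hasFDerivAt)).sub
      (((((hB1.hasFDerivAt.const_mul g1).sub (hB2.hasFDerivAt.const_mul g2)).sub
        (hB3.hasFDerivAt.const_mul g3)).add (hB4.hasFDerivAt.const_mul g4)).const_mul c)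
  show fderiv ℝ _ x (Pi.single i 1) = _
  rw [H.fderiv]
  simp [pd]
  ring

end pdlemmas

def Fm (n : ℕ) (η : Fin n → ℝ) (S : Fin n → Fin n → Fin n → Fin n → Fin n → Fin n → ℝ)
    (a b c d e f : Fin n) : ℝ :=
  S a b c d e f - S a b d c e f + (S c d a b e f - S c d b a e f)
  - (1/((n:ℝ)-2)) * (gm η a c * (∑ m, η m * (S b m d m e f + S d m b m e f))
    - gm η b c * (∑ m, η m * (S a m d m e f + S d m a m e f))
    - gm η a d * (∑ m, η m * (S b m c m e f + S c m b m e f))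
    + gm η b d * (∑ m, η m * (S a m c m e f + S c m a m e f)))

section W2
variable {n : ℕ} (η : Fin n → ℝ) {L : (Fin n → ℝ) → Fin n → Fin n → Fin n → ℝ}
  {W : (Fin n → ℝ) → Fin n → Fin n → Fin n → Fin n → ℝ}

lemma pd_add' (i : Fin n) {f g : (Fin n → ℝ) → ℝ} {x} (hf : DifferentiableAt ℝ f x)
    (hg : DifferentiableAt ℝ g x) :
    pd i (fun y => f y + g y) x = pd i f x + pd i g x := by
  simp [pd, fderiv_fun_add hf hg]

lemma pdB (t : Fin n) (z : Fin n → ℝ) {u1 u2 : Fin n → (Fin n → ℝ) → ℝ}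
    (h1 : ∀ m, DifferentiableAt ℝ (u1 m) z) (h2 : ∀ m, DifferentiableAt ℝ (u2 m) z) :
    pd t (fun y => ∑ m, η m * (u1 m y + u2 m y)) z
      = ∑ m, η m * (pd t (u1 m) z + pd t (u2 m) z) := by
  rw [pd_sum_mul η t z (fun m => (h1 m).fun_add (h2 m))]
  exact Finset.sum_congr rfl fun m _ => by rw [pd_add' t (h1 m) (h2 m)]

lemma W2nd (hLC3 : ∀ a b c, ContDiff ℝ 3 (fun x => L x a b c)) (hEq5 : Eq5 η W L)
    (x : Fin n → ℝ) (p q r s t u : Fin n) :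
    pd u (pd t (fun y => W y p q r s)) x
      = Fm n η (fun a b c d e f => pd f (pd e (pd d (fun y => L y a b c))) x) p q r s t u := by
  have LD1 : ∀ (a b c i : Fin n) z, DifferentiableAt ℝ (pd i (fun y => L y a b c)) z :=
    fun a b c i z => ((contDiff_pd_two (hLC3 a b c) i).differentiable (by norm_num)).differentiableAt
  have LD2 : ∀ (a b c i j : Fin n) z, DifferentiableAt ℝ (pd j (pd i (fun y => L y a b c))) z :=
    fun a b c i j z => ((contDiff_pd_one (contDiff_pd_two (hLC3 a b c) i) j).differentiable
      (by norm_num)).differentiableAt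
  have BD1 : ∀ (B D : Fin n) z, DifferentiableAt ℝ
      (fun y => ∑ m, η m * (pd m (fun y' => L y' B m D) y + pd m (fun y' => L y' D m B) y)) z :=
    fun B D z => DifferentiableAt.fun_sum fun m _ =>
      (((LD1 B m D m z).add (LD1 D m B m z)).const_mul (η m))
  have BD2 : ∀ (B D : Fin n) z, DifferentiableAt ℝ
      (fun y => ∑ m, η m * (pd t (pd m (fun y' => L y' B m D)) y
        + pd t (pd m (fun y' => L y' D m B)) y)) z :=
    fun B D z => DifferentiableAt.fun_sum fun m _ =>
      (((LD2 B m D m t z).add (LD2 D m B m t z)).const_mul (η m))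
  have hWfun : (fun y => W y p q r s) = fun y => rhs5 η L y p q r s :=
    funext fun y => hEq5 y p q r s
  have hshape : (fun y => rhs5 η L y p q r s)
      = fun y => pd s (fun y' => L y' p q r) y - pd r (fun y' => L y' p q s) y
        + (pd q (fun y' => L y' r s p) y - pd p (fun y' => L y' r s q) y)
        - (1/((n:ℝ)-2)) *
          (gm η p r * (∑ m, η m * (pd m (fun y' => L y' q m s) y + pd m (fun y' => L y' s m q) y))
          - gm η q r * (∑ m, η m * (pd m (fun y' => L y' p m s) y + pd m (fun y' => L y' s m p) y))
          - gm η p s * (∑ m, η m * (pd m (fun y' => L y' q m r) y + pd m (fun y' => L y' r m q) y))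
          + gm η q s * (∑ m, η m * (pd m (fun y' => L y' p m r) y + pd m (fun y' => L y' r m p) y))) := by
    funext y
    simp only [rhs5, asym22]
    ring
  have h1 : pd t (fun y => W y p q r s)
      = fun z => pd t (pd s (fun y' => L y' p q r)) z - pd t (pd r (fun y' => L y' p q s)) z
        + (pd t (pd q (fun y' => L y' r s p)) z - pd t (pd p (fun y' => L y' r s q)) z)
        - (1/((n:ℝ)-2)) *
          (gm η p r * (∑ m, η m * (pd t (pd m (fun y' => L y' q m s)) z
              + pd t (pd m (fun y' => L y' s m q)) z))
          - gm η q r * (∑ m, η m * (pd t (pd m (fun y' => L y' p m s)) z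
              + pd t (pd m (fun y' => L y' s m p)) z))
          - gm η p s * (∑ m, η m * (pd t (pd m (fun y' => L y' q m r)) z
              + pd t (pd m (fun y' => L y' r m q)) z))
          + gm η q s * (∑ m, η m * (pd t (pd m (fun y' => L y' p m r)) z
              + pd t (pd m (fun y' => L y' r m p)) z))) := by
    funext z
    rw [hWfun, hshape, pd_comb t z (1/((n:ℝ)-2)) (gm η p r) (gm η q r) (gm η p s) (gm η q s)
      (LD1 p q r s z) (LD1 p q s r z) (LD1 r s p q z) (LD1 r s q p z)
      (BD1 q s z) (BD1 p s z) (BD1 q r z) (BD1 p r z),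
      pdB η t z (fun m => LD1 q m s m z) (fun m => LD1 s m q m z),
      pdB η t z (fun m => LD1 p m s m z) (fun m => LD1 s m p m z),
      pdB η t z (fun m => LD1 q m r m z) (fun m => LD1 r m q m z),
      pdB η t z (fun m => LD1 p m r m z) (fun m => LD1 r m p m z)]
  rw [h1, pd_comb u x (1/((n:ℝ)-2)) (gm η p r) (gm η q r) (gm η p s) (gm η q s)
      (LD2 p q r s t x) (LD2 p q s r t x) (LD2 r s p q t x) (LD2 r s q p t x)
      (BD2 q s x) (BD2 p s x) (BD2 q r x) (BD2 p r x),
      pdB η u x (fun m => LD2 q m s m t x) (fun m => LD2 s m q m t x),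
      pdB η u x (fun m => LD2 p m s m t x) (fun m => LD2 s m p m t x),
      pdB η u x (fun m => LD2 q m r m t x) (fun m => LD2 r m q m t x),
      pdB η u x (fun m => LD2 p m r m t x) (fun m => LD2 r m p m t x)]
  simp only [Fm]

end W2


set_option maxHeartbeats 4000000 in
lemma key (n : ℕ) (hn : 4 ≤ n) (η : Fin n → ℝ) (hη : ∀ i, η i = 1 ∨ η i = -1)
    (S : Fin n → Fin n → Fin n → Fin n → Fin n → Fin n → ℝ)
    (hanti : ∀ a b c d e f, S a b c d e f = - S b a c d e f)
    (hde : ∀ a b c d e f, S a b c d e f = S a b c e d f)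
    (hef : ∀ a b c d e f, S a b c d e f = S a b c d f e)
    (htr : ∀ a d e f, ∑ j, η j * S a j j d e f = 0)
    (a b c d : Fin n) :
    (∑ i, η i * asym33 (fun a b f c d e => Fm n η S a b c d e f) a b i c d i) =
      -(4 * ((n : ℝ) - 4) / (9 * ((n : ℝ) - 2))) *
          asym22 (fun a b c d => ∑ i, η i * (S a i c i d b + S c i a i d b)) a b c d
      - (4 / (9 * ((n : ℝ) - 3))) *
          asym22 (fun a b c d =>
            gm η a c * ∑ i, ∑ j, η i * η j * Fm n η S b i d j i j) a b c d := by
  have htrA : ∀ p d e f, ∑ j, η j * S p j j d e f = 0 := htr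
  have htrB : ∀ p d e f, ∑ j, η j * S j p j d e f = 0 := fun p d e f => by
    rw [show (∑ j, η j * S j p j d e f) = ∑ j, -(η j * S p j j d e f) from
      Finset.sum_congr rfl fun j _ => by rw [hanti j p j d e f]; ring,
      Finset.sum_neg_distrib, htrA p d e f, neg_zero]
  have hzero : ∀ a c d e f, S a a c d e f = 0 := fun a c d e f => by
    have h := hanti a a c d e f; linarith
  have hTsplit : ∀ p1 p2 p3 p4 : Fin n,
      (∑ m, η m * (S p1 m p2 m p3 p4 + S p2 m p1 m p3 p4))
        = (∑ m, η m * S p1 m p2 m p3 p4) + (∑ m, η m * S p2 m p1 m p3 p4) := by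
    intro p1 p2 p3 p4
    rw [show (∑ m, η m * (S p1 m p2 m p3 p4 + S p2 m p1 m p3 p4))
        = ∑ m, (η m * S p1 m p2 m p3 p4 + η m * S p2 m p1 m p3 p4) from
      Finset.sum_congr rfl fun m _ => by ring, Finset.sum_add_distrib]
  have E13 : ∀ p q r s : Fin n, (∑ i, η i * Fm n η S i p i q r s) = -((∑ m, η m * S m p q m r s)) - (∑ m, η m * S m q p m r s) + ((1/((n:ℝ)-2)) * (n:ℝ)) * (∑ m, η m * S m p q m r s) + ((1/((n:ℝ)-2)) * (n:ℝ)) * (∑ m, η m * S m q p m r s) - ((1/((n:ℝ)-2))) * (∑ m, η m * S m p q m r s) - ((1/((n:ℝ)-2))) * (∑ m, η m * S m q p m r s) - ((1/((n:ℝ)-2))) * (∑ m, η m * S m p q m r s) - ((1/((n:ℝ)-2))) * (∑ m, η m * S m q p m r s) := by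
    intro p q r s
    have hc1 : (∑ m, η m * S m p m q r s) = (0:ℝ) := by
      exact (htrB p q r s)
    have hc2 : (∑ m, η m * S m q m p r s) = (0:ℝ) := by
      exact (htrB q p r s)
    have hc3 : (∑ m, η m * S p m q m r s) = -(∑ m, η m * S m p q m r s) := by
      rw [show ∑ m, η m * S p m q m r s = -(∑ m, η m * S m p q m r s) from by rw [show ∑ m, η m * S p m q m r s = ∑ m, -(η m * S m p q m r s) from Finset.sum_congr rfl fun m _ => by rw [hanti p m q m r s]; ring]; exact Finset.sum_neg_distrib _]
    have hc4 : (∑ m, η m * S q m p m r s) = -(∑ m, η m * S m q p m r s) := by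
      rw [show ∑ m, η m * S q m p m r s = -(∑ m, η m * S m q p m r s) from by rw [show ∑ m, η m * S q m p m r s = ∑ m, -(η m * S m q p m r s) from Finset.sum_congr rfl fun m _ => by rw [hanti q m p m r s]; ring]; exact Finset.sum_neg_distrib _]
    have hc5 : (∑ m, η m * (∑ k, η k * S m k m k r s)) = (0:ℝ) := by
      rw [show ∑ m, η m * (∑ k, η k * S m k m k r s) = ∑ m, η m * (∑ k, η k * S k m k m r s) from by rw [swap_sum η]]
      exact (show ∑ m, η m * (∑ k, η k * S k m k m r s) = (0:ℝ) from by rw [show ∑ m, η m * (∑ k, η k * S k m k m r s) = ∑ m, η m * (0:ℝ) from Finset.sum_congr rfl fun m _ => by rw [htrB m m r s]]; simp)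
    rw [show (∑ i, η i * Fm n η S i p i q r s) = ∑ i, ((η i * S i p i q r s) - (η i * S i p q i r s) + (η i * S i q i p r s) - (η i * S i q p i r s) - ((1/((n:ℝ)-2))) * (η i * (gm η i i * (∑ m, η m * S p m q m r s))) - ((1/((n:ℝ)-2))) * (η i * (gm η i i * (∑ m, η m * S q m p m r s))) + ((1/((n:ℝ)-2))) * (η i * (gm η p i * (∑ m, η m * S i m q m r s))) + ((1/((n:ℝ)-2))) * (η i * (gm η p i * (∑ m, η m * S q m i m r s))) + ((1/((n:ℝ)-2))) * (η i * (gm η q i * (∑ m, η m * S p m i m r s))) + ((1/((n:ℝ)-2))) * (η i * (gm η q i * (∑ m, η m * S i m p m r s))) - ((1/((n:ℝ)-2)) * gm η p q) * (η i * (∑ m, η m * S i m i m r s)) - ((1/((n:ℝ)-2)) * gm η p q) * (η i * (∑ m, η m * S i m i m r s))) from Finset.sum_congr rfl fun i _ => by simp only [Fm]; rw [hTsplit p q r s, hTsplit i q r s, hTsplit p i r s, gm_comm η i q, hTsplit i i r s]; ring]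
    simp only [Finset.sum_add_distrib, Finset.sum_sub_distrib, Finset.sum_neg_distrib, ← Finset.mul_sum]
    simp only [col1 hη, diagsum hη, hc1, hc2, hc3, hc4, hc5]
    ring
  have E14 : ∀ p q r s : Fin n, (∑ i, η i * Fm n η S i p q i r s) = (∑ m, η m * S m p q m r s) + (∑ m, η m * S m q p m r s) + ((1/((n:ℝ)-2))) * (∑ m, η m * S m p q m r s) + ((1/((n:ℝ)-2))) * (∑ m, η m * S m q p m r s) - ((1/((n:ℝ)-2)) * (n:ℝ)) * (∑ m, η m * S m p q m r s) - ((1/((n:ℝ)-2)) * (n:ℝ)) * (∑ m, η m * S m q p m r s) + ((1/((n:ℝ)-2))) * (∑ m, η m * S m p q m r s) + ((1/((n:ℝ)-2))) * (∑ m, η m * S m q p m r s) := by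
    intro p q r s
    have hc6 : (∑ m, η m * S m p m q r s) = (0:ℝ) := by
      exact (htrB p q r s)
    have hc7 : (∑ m, η m * S q m m p r s) = (0:ℝ) := by
      exact (htrA q p r s)
    have hc8 : (∑ m, η m * S q m p m r s) = -(∑ m, η m * S m q p m r s) := by
      rw [show ∑ m, η m * S q m p m r s = -(∑ m, η m * S m q p m r s) from by rw [show ∑ m, η m * S q m p m r s = ∑ m, -(η m * S m q p m r s) from Finset.sum_congr rfl fun m _ => by rw [hanti q m p m r s]; ring]; exact Finset.sum_neg_distrib _]
    have hc9 : (∑ m, η m * S p m q m r s) = -(∑ m, η m * S m p q m r s) := by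
      rw [show ∑ m, η m * S p m q m r s = -(∑ m, η m * S m p q m r s) from by rw [show ∑ m, η m * S p m q m r s = ∑ m, -(η m * S m p q m r s) from Finset.sum_congr rfl fun m _ => by rw [hanti p m q m r s]; ring]; exact Finset.sum_neg_distrib _]
    have hc10 : (∑ m, η m * (∑ k, η k * S m k m k r s)) = (0:ℝ) := by
      rw [show ∑ m, η m * (∑ k, η k * S m k m k r s) = ∑ m, η m * (∑ k, η k * S k m k m r s) from by rw [swap_sum η]]
      exact (show ∑ m, η m * (∑ k, η k * S k m k m r s) = (0:ℝ) from by rw [show ∑ m, η m * (∑ k, η k * S k m k m r s) = ∑ m, η m * (0:ℝ) from Finset.sum_congr rfl fun m _ => by rw [htrB m m r s]]; simp)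
    rw [show (∑ i, η i * Fm n η S i p q i r s) = ∑ i, ((η i * S i p q i r s) - (η i * S i p i q r s) + (η i * S q i i p r s) - (η i * S q i p i r s) - ((1/((n:ℝ)-2))) * (η i * (gm η q i * (∑ m, η m * S p m i m r s))) - ((1/((n:ℝ)-2))) * (η i * (gm η q i * (∑ m, η m * S i m p m r s))) + ((1/((n:ℝ)-2)) * gm η p q) * (η i * (∑ m, η m * S i m i m r s)) + ((1/((n:ℝ)-2)) * gm η p q) * (η i * (∑ m, η m * S i m i m r s)) + ((1/((n:ℝ)-2))) * (η i * (gm η i i * (∑ m, η m * S p m q m r s))) + ((1/((n:ℝ)-2))) * (η i * (gm η i i * (∑ m, η m * S q m p m r s))) - ((1/((n:ℝ)-2))) * (η i * (gm η p i * (∑ m, η m * S i m q m r s))) - ((1/((n:ℝ)-2))) * (η i * (gm η p i * (∑ m, η m * S q m i m r s)))) from Finset.sum_congr rfl fun i _ => by simp only [Fm]; rw [hTsplit p i r s, gm_comm η i q, hTsplit i i r s, hTsplit p q r s, hTsplit i q r s]; ring]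
    simp only [Finset.sum_add_distrib, Finset.sum_sub_distrib, Finset.sum_neg_distrib, ← Finset.mul_sum]
    simp only [col1 hη, diagsum hη, hc10, hc6, hc7, hc8, hc9]
    ring
  have E15 : ∀ p q r s : Fin n, (∑ i, η i * Fm n η S i p q r i s) = (∑ m, η m * S m p q m r s) - (∑ m, η m * S m p r m q s) + (∑ m, η m * S q r m m p s) - (∑ m, η m * S q r p m m s) + ((1/((n:ℝ)-2))) * (∑ m, η m * S m p r m q s) + ((1/((n:ℝ)-2))) * (∑ m, η m * S m r p m q s) - ((1/((n:ℝ)-2)) * gm η p q) * (∑ m, η m * (∑ k, η k * S m r k m k s)) - ((1/((n:ℝ)-2))) * (∑ m, η m * S m p q m r s) - ((1/((n:ℝ)-2))) * (∑ m, η m * S m q p m r s) + ((1/((n:ℝ)-2)) * gm η p r) * (∑ m, η m * (∑ k, η k * S m q k m k s)) := by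
    intro p q r s
    have hc11 : (∑ m, η m * S m p q r m s) = (∑ m, η m * S m p q m r s) := by
      rw [show ∑ m, η m * S m p q r m s = ∑ m, η m * S m p q m r s from Finset.sum_congr rfl fun m _ => by rw [hde m p q r m s]]
    have hc12 : (∑ m, η m * S m p r q m s) = (∑ m, η m * S m p r m q s) := by
      rw [show ∑ m, η m * S m p r q m s = ∑ m, η m * S m p r m q s from Finset.sum_congr rfl fun m _ => by rw [hde m p r q m s]]
    have hc13 : (∑ m, η m * S q r m p m s) = (∑ m, η m * S q r m m p s) := by
      rw [show ∑ m, η m * S q r m p m s = ∑ m, η m * S q r m m p s from Finset.sum_congr rfl fun m _ => by rw [hde q r m p m s]]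
    have hc14 : (∑ m, η m * S p m r m q s) = -(∑ m, η m * S m p r m q s) := by
      rw [show ∑ m, η m * S p m r m q s = -(∑ m, η m * S m p r m q s) from by rw [show ∑ m, η m * S p m r m q s = ∑ m, -(η m * S m p r m q s) from Finset.sum_congr rfl fun m _ => by rw [hanti p m r m q s]; ring]; exact Finset.sum_neg_distrib _]
    have hc15 : (∑ m, η m * S r m p m q s) = -(∑ m, η m * S m r p m q s) := by
      rw [show ∑ m, η m * S r m p m q s = -(∑ m, η m * S m r p m q s) from by rw [show ∑ m, η m * S r m p m q s = ∑ m, -(η m * S m r p m q s) from Finset.sum_congr rfl fun m _ => by rw [hanti r m p m q s]; ring]; exact Finset.sum_neg_distrib _]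
    have hc16 : (∑ m, η m * (∑ k, η k * S m k r k m s)) = (0:ℝ) := by
      have e1 : (∑ m, η m * (∑ k, η k * S m k r k m s)) = -(∑ m, η m * (∑ k, η k * S k m r m k s)) := show ∑ m, η m * (∑ k, η k * S m k r k m s) = -(∑ m, η m * (∑ k, η k * S k m r m k s)) from by rw [show ∑ m, η m * (∑ k, η k * S m k r k m s) = ∑ m, -(η m * (∑ k, η k * S k m r m k s)) from Finset.sum_congr rfl fun m _ => by rw [show ∑ k, η k * S m k r k m s = -(∑ k, η k * S k m r m k s) from by rw [show ∑ k, η k * S m k r k m s = ∑ k, -(η k * S k m r m k s) from Finset.sum_congr rfl fun k _ => by rw [hanti m k r k m s, hde k m r k m s]; ring]; exact Finset.sum_neg_distrib _]; ring]; exact Finset.sum_neg_distrib _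
      have e2 : (∑ m, η m * (∑ k, η k * S k m r m k s)) = (∑ m, η m * (∑ k, η k * S m k r k m s)) := by
        rw [show ∑ m, η m * (∑ k, η k * S k m r m k s) = ∑ m, η m * (∑ k, η k * S m k r k m s) from by rw [swap_sum η]]
      rw [e2] at e1
      linarith
    have hc17 : (∑ m, η m * (∑ k, η k * S r k m k m s)) = -(∑ m, η m * (∑ k, η k * S m r k m k s)) := by
      rw [show ∑ m, η m * (∑ k, η k * S r k m k m s) = -(∑ m, η m * (∑ k, η k * S k r m k m s)) from by rw [show ∑ m, η m * (∑ k, η k * S r k m k m s) = ∑ m, -(η m * (∑ k, η k * S k r m k m s)) from Finset.sum_congr rfl fun m _ => by rw [show ∑ k, η k * S r k m k m s = -(∑ k, η k * S k r m k m s) from by rw [show ∑ k, η k * S r k m k m s = ∑ k, -(η k * S k r m k m s) from Finset.sum_congr rfl fun k _ => by rw [hanti r k m k m s]; ring]; exact Finset.sum_neg_distrib _]; ring]; exact Finset.sum_neg_distrib _,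
          show ∑ m, η m * (∑ k, η k * S k r m k m s) = ∑ m, η m * (∑ k, η k * S m r k m k s) from by rw [swap_sum η]]
    have hc18 : (∑ m, η m * S p m q m r s) = -(∑ m, η m * S m p q m r s) := by
      rw [show ∑ m, η m * S p m q m r s = -(∑ m, η m * S m p q m r s) from by rw [show ∑ m, η m * S p m q m r s = ∑ m, -(η m * S m p q m r s) from Finset.sum_congr rfl fun m _ => by rw [hanti p m q m r s]; ring]; exact Finset.sum_neg_distrib _]
    have hc19 : (∑ m, η m * S q m p m r s) = -(∑ m, η m * S m q p m r s) := by
      rw [show ∑ m, η m * S q m p m r s = -(∑ m, η m * S m q p m r s) from by rw [show ∑ m, η m * S q m p m r s = ∑ m, -(η m * S m q p m r s) from Finset.sum_congr rfl fun m _ => by rw [hanti q m p m r s]; ring]; exact Finset.sum_neg_distrib _]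
    have hc20 : (∑ m, η m * (∑ k, η k * S m k q k m s)) = (0:ℝ) := by
      have e1 : (∑ m, η m * (∑ k, η k * S m k q k m s)) = -(∑ m, η m * (∑ k, η k * S k m q m k s)) := show ∑ m, η m * (∑ k, η k * S m k q k m s) = -(∑ m, η m * (∑ k, η k * S k m q m k s)) from by rw [show ∑ m, η m * (∑ k, η k * S m k q k m s) = ∑ m, -(η m * (∑ k, η k * S k m q m k s)) from Finset.sum_congr rfl fun m _ => by rw [show ∑ k, η k * S m k q k m s = -(∑ k, η k * S k m q m k s) from by rw [show ∑ k, η k * S m k q k m s = ∑ k, -(η k * S k m q m k s) from Finset.sum_congr rfl fun k _ => by rw [hanti m k q k m s, hde k m q k m s]; ring]; exact Finset.sum_neg_distrib _]; ring]; exact Finset.sum_neg_distrib _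
      have e2 : (∑ m, η m * (∑ k, η k * S k m q m k s)) = (∑ m, η m * (∑ k, η k * S m k q k m s)) := by
        rw [show ∑ m, η m * (∑ k, η k * S k m q m k s) = ∑ m, η m * (∑ k, η k * S m k q k m s) from by rw [swap_sum η]]
      rw [e2] at e1
      linarith
    have hc21 : (∑ m, η m * (∑ k, η k * S q k m k m s)) = -(∑ m, η m * (∑ k, η k * S m q k m k s)) := by
      rw [show ∑ m, η m * (∑ k, η k * S q k m k m s) = -(∑ m, η m * (∑ k, η k * S k q m k m s)) from by rw [show ∑ m, η m * (∑ k, η k * S q k m k m s) = ∑ m, -(η m * (∑ k, η k * S k q m k m s)) from Finset.sum_congr rfl fun m _ => by rw [show ∑ k, η k * S q k m k m s = -(∑ k, η k * S k q m k m s) from by rw [show ∑ k, η k * S q k m k m s = ∑ k, -(η k * S k q m k m s) from Finset.sum_congr rfl fun k _ => by rw [hanti q k m k m s]; ring]; exact Finset.sum_neg_distrib _]; ring]; exact Finset.sum_neg_distrib _,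
          show ∑ m, η m * (∑ k, η k * S k q m k m s) = ∑ m, η m * (∑ k, η k * S m q k m k s) from by rw [swap_sum η]]
    rw [show (∑ i, η i * Fm n η S i p q r i s) = ∑ i, ((η i * S i p q r i s) - (η i * S i p r q i s) + (η i * S q r i p i s) - (η i * S q r p i i s) - ((1/((n:ℝ)-2))) * (η i * (gm η q i * (∑ m, η m * S p m r m i s))) - ((1/((n:ℝ)-2))) * (η i * (gm η q i * (∑ m, η m * S r m p m i s))) + ((1/((n:ℝ)-2)) * gm η p q) * (η i * (∑ m, η m * S i m r m i s)) + ((1/((n:ℝ)-2)) * gm η p q) * (η i * (∑ m, η m * S r m i m i s)) + ((1/((n:ℝ)-2))) * (η i * (gm η r i * (∑ m, η m * S p m q m i s))) + ((1/((n:ℝ)-2))) * (η i * (gm η r i * (∑ m, η m * S q m p m i s))) - ((1/((n:ℝ)-2)) * gm η p r) * (η i * (∑ m, η m * S i m q m i s)) - ((1/((n:ℝ)-2)) * gm η p r) * (η i * (∑ m, η m * S q m i m i s))) from Finset.sum_congr rfl fun i _ => by simp only [Fm]; rw [hTsplit p r i s, gm_comm η i q, hTsplit i r i s, hTsplit p q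 i s, gm_comm η i r, hTsplit i q i s]; ring]
    simp only [Finset.sum_add_distrib, Finset.sum_sub_distrib, Finset.sum_neg_distrib, ← Finset.mul_sum]
    simp only [col1 hη, diagsum hη, hc11, hc12, hc13, hc14, hc15, hc16, hc17, hc18, hc19, hc20, hc21]
    ring
  have E23 : ∀ p q r s : Fin n, (∑ i, η i * Fm n η S p i i q r s) = (∑ m, η m * S m p q m r s) + (∑ m, η m * S m q p m r s) + ((1/((n:ℝ)-2))) * (∑ m, η m * S m p q m r s) + ((1/((n:ℝ)-2))) * (∑ m, η m * S m q p m r s) - ((1/((n:ℝ)-2)) * (n:ℝ)) * (∑ m, η m * S m p q m r s) - ((1/((n:ℝ)-2)) * (n:ℝ)) * (∑ m, η m * S m q p m r s) + ((1/((n:ℝ)-2))) * (∑ m, η m * S m p q m r s) + ((1/((n:ℝ)-2))) * (∑ m, η m * S m q p m r s) := by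
    intro p q r s
    have hc22 : (∑ m, η m * S p m m q r s) = (0:ℝ) := by
      exact (htrA p q r s)
    have hc23 : (∑ m, η m * S p m q m r s) = -(∑ m, η m * S m p q m r s) := by
      rw [show ∑ m, η m * S p m q m r s = -(∑ m, η m * S m p q m r s) from by rw [show ∑ m, η m * S p m q m r s = ∑ m, -(η m * S m p q m r s) from Finset.sum_congr rfl fun m _ => by rw [hanti p m q m r s]; ring]; exact Finset.sum_neg_distrib _]
    have hc24 : (∑ m, η m * S m q m p r s) = (0:ℝ) := by
      exact (htrB q p r s)
    have hc25 : (∑ m, η m * S q m p m r s) = -(∑ m, η m * S m q p m r s) := by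
      rw [show ∑ m, η m * S q m p m r s = -(∑ m, η m * S m q p m r s) from by rw [show ∑ m, η m * S q m p m r s = ∑ m, -(η m * S m q p m r s) from Finset.sum_congr rfl fun m _ => by rw [hanti q m p m r s]; ring]; exact Finset.sum_neg_distrib _]
    have hc26 : (∑ m, η m * (∑ k, η k * S m k m k r s)) = (0:ℝ) := by
      rw [show ∑ m, η m * (∑ k, η k * S m k m k r s) = ∑ m, η m * (∑ k, η k * S k m k m r s) from by rw [swap_sum η]]
      exact (show ∑ m, η m * (∑ k, η k * S k m k m r s) = (0:ℝ) from by rw [show ∑ m, η m * (∑ k, η k * S k m k m r s) = ∑ m, η m * (0:ℝ) from Finset.sum_congr rfl fun m _ => by rw [htrB m m r s]]; simp)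
    rw [show (∑ i, η i * Fm n η S p i i q r s) = ∑ i, ((η i * S p i i q r s) - (η i * S p i q i r s) + (η i * S i q p i r s) - (η i * S i q i p r s) - ((1/((n:ℝ)-2))) * (η i * (gm η p i * (∑ m, η m * S i m q m r s))) - ((1/((n:ℝ)-2))) * (η i * (gm η p i * (∑ m, η m * S q m i m r s))) + ((1/((n:ℝ)-2))) * (η i * (gm η i i * (∑ m, η m * S p m q m r s))) + ((1/((n:ℝ)-2))) * (η i * (gm η i i * (∑ m, η m * S q m p m r s))) + ((1/((n:ℝ)-2)) * gm η p q) * (η i * (∑ m, η m * S i m i m r s)) + ((1/((n:ℝ)-2)) * gm η p q) * (η i * (∑ m, η m * S i m i m r s)) - ((1/((n:ℝ)-2))) * (η i * (gm η q i * (∑ m, η m * S p m i m r s))) - ((1/((n:ℝ)-2))) * (η i * (gm η q i * (∑ m, η m * S i m p m r s)))) from Finset.sum_congr rfl fun i _ => by simp only [Fm]; rw [hTsplit i q r s, hTsplit p q r s, hTsplit i i r s, hTsplit p i r s, gm_comm η i q]; ring]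
    simp only [Finset.sum_add_distrib, Finset.sum_sub_distrib, Finset.sum_neg_distrib, ← Finset.mul_sum]
    simp only [col1 hη, diagsum hη, hc22, hc23, hc24, hc25, hc26]
    ring
  have E24 : ∀ p q r s : Fin n, (∑ i, η i * Fm n η S p i q i r s) = -((∑ m, η m * S m p q m r s)) - (∑ m, η m * S m q p m r s) - ((1/((n:ℝ)-2))) * (∑ m, η m * S m p q m r s) - ((1/((n:ℝ)-2))) * (∑ m, η m * S m q p m r s) - ((1/((n:ℝ)-2))) * (∑ m, η m * S m p q m r s) - ((1/((n:ℝ)-2))) * (∑ m, η m * S m q p m r s) + ((1/((n:ℝ)-2)) * (n:ℝ)) * (∑ m, η m * S m p q m r s) + ((1/((n:ℝ)-2)) * (n:ℝ)) * (∑ m, η m * S m q p m r s) := by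
    intro p q r s
    have hc27 : (∑ m, η m * S p m q m r s) = -(∑ m, η m * S m p q m r s) := by
      rw [show ∑ m, η m * S p m q m r s = -(∑ m, η m * S m p q m r s) from by rw [show ∑ m, η m * S p m q m r s = ∑ m, -(η m * S m p q m r s) from Finset.sum_congr rfl fun m _ => by rw [hanti p m q m r s]; ring]; exact Finset.sum_neg_distrib _]
    have hc28 : (∑ m, η m * S p m m q r s) = (0:ℝ) := by
      exact (htrA p q r s)
    have hc29 : (∑ m, η m * S q m p m r s) = -(∑ m, η m * S m q p m r s) := by
      rw [show ∑ m, η m * S q m p m r s = -(∑ m, η m * S m q p m r s) from by rw [show ∑ m, η m * S q m p m r s = ∑ m, -(η m * S m q p m r s) from Finset.sum_congr rfl fun m _ => by rw [hanti q m p m r s]; ring]; exact Finset.sum_neg_distrib _]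
    have hc30 : (∑ m, η m * S q m m p r s) = (0:ℝ) := by
      exact (htrA q p r s)
    have hc31 : (∑ m, η m * (∑ k, η k * S m k m k r s)) = (0:ℝ) := by
      rw [show ∑ m, η m * (∑ k, η k * S m k m k r s) = ∑ m, η m * (∑ k, η k * S k m k m r s) from by rw [swap_sum η]]
      exact (show ∑ m, η m * (∑ k, η k * S k m k m r s) = (0:ℝ) from by rw [show ∑ m, η m * (∑ k, η k * S k m k m r s) = ∑ m, η m * (0:ℝ) from Finset.sum_congr rfl fun m _ => by rw [htrB m m r s]]; simp)
    rw [show (∑ i, η i * Fm n η S p i q i r s) = ∑ i, ((η i * S p i q i r s) - (η i * S p i i q r s) + (η i * S q i p i r s) - (η i * S q i i p r s) - ((1/((n:ℝ)-2)) * gm η p q) * (η i * (∑ m, η m * S i m i m r s)) - ((1/((n:ℝ)-2)) * gm η p q) * (η i * (∑ m, η m * S i m i m r s)) + ((1/((n:ℝ)-2))) * (η i * (gm η q i * (∑ m, η m * S p m i m r s))) + ((1/((n:ℝ)-2))) * (η i * (gm η q i * (∑ m, η m * S i m p m r s))) + ((1/((n:ℝ)-2))) * (η i * (gm η p i * (∑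 m, η m * S i m q m r s))) + ((1/((n:ℝ)-2))) * (η i * (gm η p i * (∑ m, η m * S q m i m r s))) - ((1/((n:ℝ)-2))) * (η i * (gm η i i * (∑ m, η m * S p m q m r s))) - ((1/((n:ℝ)-2))) * (η i * (gm η i i * (∑ m, η m * S q m p m r s)))) from Finset.sum_congr rfl fun i _ => by simp only [Fm]; rw [hTsplit i i r s, hTsplit p i r s, gm_comm η i q, hTsplit i q r s, hTsplit p q r s]; ring]
    simp only [Finset.sum_add_distrib, Finset.sum_sub_distrib, Finset.sum_neg_distrib, ← Finset.mul_sum]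
    simp only [col1 hη, diagsum hη, hc27, hc28, hc29, hc30, hc31]
    ring
  have E25 : ∀ p q r s : Fin n, (∑ i, η i * Fm n η S p i q r i s) = -((∑ m, η m * S m p q m r s)) + (∑ m, η m * S m p r m q s) + (∑ m, η m * S q r p m m s) - (∑ m, η m * S q r m m p s) + ((1/((n:ℝ)-2)) * gm η p q) * (∑ m, η m * (∑ k, η k * S m r k m k s)) - ((1/((n:ℝ)-2))) * (∑ m, η m * S m p r m q s) - ((1/((n:ℝ)-2))) * (∑ m, η m * S m r p m q s) - ((1/((n:ℝ)-2)) * gm η p r) * (∑ m, η m * (∑ k, η k * S m q k m k s)) + ((1/((n:ℝ)-2))) * (∑ m, η m * S m p q m r s) + ((1/((n:ℝ)-2))) * (∑ m, η m * S m q p m r s) := by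
    intro p q r s
    have hc32 : (∑ m, η m * S p m q r m s) = -(∑ m, η m * S m p q m r s) := by
      rw [show ∑ m, η m * S p m q r m s = -(∑ m, η m * S m p q m r s) from by rw [show ∑ m, η m * S p m q r m s = ∑ m, -(η m * S m p q m r s) from Finset.sum_congr rfl fun m _ => by rw [hanti p m q r m s, hde m p q r m s]; ring]; exact Finset.sum_neg_distrib _]
    have hc33 : (∑ m, η m * S p m r q m s) = -(∑ m, η m * S m p r m q s) := by
      rw [show ∑ m, η m * S p m r q m s = -(∑ m, η m * S m p r m q s) from by rw [show ∑ m, η m * S p m r q m s = ∑ m, -(η m * S m p r m q s) from Finset.sum_congr rfl fun m _ => by rw [hanti p m r q m s, hde m p r q m s]; ring]; exact Finset.sum_neg_distrib _]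
    have hc34 : (∑ m, η m * S q r m p m s) = (∑ m, η m * S q r m m p s) := by
      rw [show ∑ m, η m * S q r m p m s = ∑ m, η m * S q r m m p s from Finset.sum_congr rfl fun m _ => by rw [hde q r m p m s]]
    have hc35 : (∑ m, η m * (∑ k, η k * S m k r k m s)) = (0:ℝ) := by
      have e1 : (∑ m, η m * (∑ k, η k * S m k r k m s)) = -(∑ m, η m * (∑ k, η k * S k m r m k s)) := show ∑ m, η m * (∑ k, η k * S m k r k m s) = -(∑ m, η m * (∑ k, η k * S k m r m k s)) from by rw [show ∑ m, η m * (∑ k, η k * S m k r k m s) = ∑ m, -(η m * (∑ k, η k * S k m r m k s)) from Finset.sum_congr rfl fun m _ => by rw [show ∑ k, η k * S m k r k m s = -(∑ k, η k * S k m r m k s) from by rw [show ∑ k, η k * S m k r k m s = ∑ k, -(η k * S k m r m k s) from Finset.sum_congr rfl fun k _ => by rw [hanti m k r k m s, hde k m r k m s]; ring]; exact Finset.sum_neg_distrib _]; ring]; exact Finset.sum_neg_distrib _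
      have e2 : (∑ m, η m * (∑ k, η k * S k m r m k s)) = (∑ m, η m * (∑ k, η k * S m k r k m s)) := by
        rw [show ∑ m, η m * (∑ k, η k * S k m r m k s) = ∑ m, η m * (∑ k, η k * S m k r k m s) from by rw [swap_sum η]]
      rw [e2] at e1
      linarith
    have hc36 : (∑ m, η m * (∑ k, η k * S r k m k m s)) = -(∑ m, η m * (∑ k, η k * S m r k m k s)) := by
      rw [show ∑ m, η m * (∑ k, η k * S r k m k m s) = -(∑ m, η m * (∑ k, η k * S k r m k m s)) from by rw [show ∑ m, η m * (∑ k, η k * S r k m k m s) = ∑ m, -(η m * (∑ k, η k * S k r m k m s)) from Finset.sum_congr rfl fun m _ => by rw [show ∑ k, η k * S r k m k m s = -(∑ k, η k * S k r m k m s) from by rw [show ∑ k, η k * S r k m k m s = ∑ k, -(η k * S k r m k m s) from Finset.sum_congr rfl fun k _ => by rw [hanti r k m k m s]; ring]; exact Finset.sum_neg_distrib _]; ring]; exact Finset.sum_neg_distrib _,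
          show ∑ m, η m * (∑ k, η k * S k r m k m s) = ∑ m, η m * (∑ k, η k * S m r k m k s) from by rw [swap_sum η]]
    have hc37 : (∑ m, η m * S p m r m q s) = -(∑ m, η m * S m p r m q s) := by
      rw [show ∑ m, η m * S p m r m q s = -(∑ m, η m * S m p r m q s) from by rw [show ∑ m, η m * S p m r m q s = ∑ m, -(η m * S m p r m q s) from Finset.sum_congr rfl fun m _ => by rw [hanti p m r m q s]; ring]; exact Finset.sum_neg_distrib _]
    have hc38 : (∑ m, η m * S r m p m q s) = -(∑ m, η m * S m r p m q s) := by
      rw [show ∑ m, η m * S r m p m q s = -(∑ m, η m * S m r p m q s) from by rw [show ∑ m, η m * S r m p m q s = ∑ m, -(η m * S m r p m q s) from Finset.sum_congr rfl fun m _ => by rw [hanti r m p m q s]; ring]; exact Finset.sum_neg_distrib _]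
    have hc39 : (∑ m, η m * (∑ k, η k * S m k q k m s)) = (0:ℝ) := by
      have e1 : (∑ m, η m * (∑ k, η k * S m k q k m s)) = -(∑ m, η m * (∑ k, η k * S k m q m k s)) := show ∑ m, η m * (∑ k, η k * S m k q k m s) = -(∑ m, η m * (∑ k, η k * S k m q m k s)) from by rw [show ∑ m, η m * (∑ k, η k * S m k q k m s) = ∑ m, -(η m * (∑ k, η k * S k m q m k s)) from Finset.sum_congr rfl fun m _ => by rw [show ∑ k, η k * S m k q k m s = -(∑ k, η k * S k m q m k s) from by rw [show ∑ k, η k * S m k q k m s = ∑ k, -(η k * S k m q m k s) from Finset.sum_congr rfl fun k _ => by rw [hanti m k q k m s, hde k m q k m s]; ring]; exact Finset.sum_neg_distrib _]; ring]; exact Finset.sum_neg_distrib _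
      have e2 : (∑ m, η m * (∑ k, η k * S k m q m k s)) = (∑ m, η m * (∑ k, η k * S m k q k m s)) := by
        rw [show ∑ m, η m * (∑ k, η k * S k m q m k s) = ∑ m, η m * (∑ k, η k * S m k q k m s) from by rw [swap_sum η]]
      rw [e2] at e1
      linarith
    have hc40 : (∑ m, η m * (∑ k, η k * S q k m k m s)) = -(∑ m, η m * (∑ k, η k * S m q k m k s)) := by
      rw [show ∑ m, η m * (∑ k, η k * S q k m k m s) = -(∑ m, η m * (∑ k, η k * S k q m k m s)) from by rw [show ∑ m, η m * (∑ k, η k * S q k m k m s) = ∑ m, -(η m * (∑ k, η k * S k q m k m s)) from Finset.sum_congr rfl fun m _ => by rw [show ∑ k, η k * S q k m k m s = -(∑ k, η k * S k q m k m s) from by rw [show ∑ k, η k * S q k m k m s = ∑ k, -(η k * S k q m k m s) from Finset.sum_congr rfl fun k _ => by rw [hanti q k m k m s]; ring]; exact Finset.sum_neg_distrib _]; ring]; exact Finset.sum_neg_distrib _,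
          show ∑ m, η m * (∑ k, η k * S k q m k m s) = ∑ m, η m * (∑ k, η k * S m q k m k s) from by rw [swap_sum η]]
    have hc41 : (∑ m, η m * S p m q m r s) = -(∑ m, η m * S m p q m r s) := by
      rw [show ∑ m, η m * S p m q m r s = -(∑ m, η m * S m p q m r s) from by rw [show ∑ m, η m * S p m q m r s = ∑ m, -(η m * S m p q m r s) from Finset.sum_congr rfl fun m _ => by rw [hanti p m q m r s]; ring]; exact Finset.sum_neg_distrib _]
    have hc42 : (∑ m, η m * S q m p m r s) = -(∑ m, η m * S m q p m r s) := by
      rw [show ∑ m, η m * S q m p m r s = -(∑ m, η m * S m q p m r s) from by rw [show ∑ m, η m * S q m p m r s = ∑ m, -(η m * S m q p m r s) from Finset.sum_congr rfl fun m _ => by rw [hanti q m p m r s]; ring]; exact Finset.sum_neg_distrib _]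
    rw [show (∑ i, η i * Fm n η S p i q r i s) = ∑ i, ((η i * S p i q r i s) - (η i * S p i r q i s) + (η i * S q r p i i s) - (η i * S q r i p i s) - ((1/((n:ℝ)-2)) * gm η p q) * (η i * (∑ m, η m * S i m r m i s)) - ((1/((n:ℝ)-2)) * gm η p q) * (η i * (∑ m, η m * S r m i m i s)) + ((1/((n:ℝ)-2))) * (η i * (gm η q i * (∑ m, η m * S p m r m i s))) + ((1/((n:ℝ)-2))) * (η i * (gm η q i * (∑ m, η m * S r m p m i s))) + ((1/((n:ℝ)-2)) * gm η p r) * (η i * (∑ m, η m * S i m q m i s)) + ((1/((n:ℝ)-2)) * gm η p r) * (η i * (∑ m, η m * S q m i m i s)) - ((1/((n:ℝ)-2))) * (η i * (gm η r i * (∑ m, η m * S p m q m i s))) - ((1/((n:ℝ)-2))) * (η i * (gm η r i * (∑ m, η m * S q m p m i s)))) from Finset.sum_congr rfl fun i _ => by simp only [Fm]; rw [hTsplit i r i s, hTsplit p r i s, gm_comm η i q, hTsplit i q i s, hTsplit p q i s, gm_comm η i r]; ring]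
    simp only [Finset.sum_add_distrib, Finset.sum_sub_distrib, Finset.sum_neg_distrib, ← Finset.mul_sum]
    simp only [col1 hη, diagsum hη, hc32, hc33, hc34, hc35, hc36, hc37, hc38, hc39, hc40, hc41, hc42]
    ring
  have E63 : ∀ p q r s : Fin n, (∑ i, η i * Fm n η S p q i r s i) = (∑ m, η m * S p q m m r s) - (∑ m, η m * S p q r m m s) + (∑ m, η m * S m r p m q s) - (∑ m, η m * S m r q m p s) + ((1/((n:ℝ)-2))) * (∑ m, η m * S m q r m p s) + ((1/((n:ℝ)-2))) * (∑ m, η m * S m r q m p s) - ((1/((n:ℝ)-2))) * (∑ m, η m * S m p r m q s) - ((1/((n:ℝ)-2))) * (∑ m, η m * S m r p m q s) - ((1/((n:ℝ)-2)) * gm η p r) * (∑ m, η m * (∑ k, η k * S m q k m k s)) + ((1/((n:ℝ)-2)) * gm η q r) * (∑ m, η m * (∑ k, η k * S m p k m k s)) := by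
    intro p q r s
    have hc43 : (∑ m, η m * S p q m r s m) = (∑ m, η m * S p q m m r s) := by
      rw [show ∑ m, η m * S p q m r s m = ∑ m, η m * S p q m m r s from Finset.sum_congr rfl fun m _ => by rw [hef p q m r s m, hde p q m r m s]]
    have hc44 : (∑ m, η m * S p q r m s m) = (∑ m, η m * S p q r m m s) := by
      rw [show ∑ m, η m * S p q r m s m = ∑ m, η m * S p q r m m s from Finset.sum_congr rfl fun m _ => by rw [hef p q r m s m]]
    have hc45 : (∑ m, η m * S m r p q s m) = (∑ m, η m * S m r p m q s) := by
      rw [show ∑ m, η m * S m r p q s m = ∑ m, η m * S m r p m q s from Finset.sum_congr rfl fun m _ => by rw [hef m r p q s m, hde m r p q m s]]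
    have hc46 : (∑ m, η m * S m r q p s m) = (∑ m, η m * S m r q m p s) := by
      rw [show ∑ m, η m * S m r q p s m = ∑ m, η m * S m r q m p s from Finset.sum_congr rfl fun m _ => by rw [hef m r q p s m, hde m r q p m s]]
    have hc47 : (∑ m, η m * S q m r m s p) = -(∑ m, η m * S m q r m p s) := by
      rw [show ∑ m, η m * S q m r m s p = -(∑ m, η m * S m q r m p s) from by rw [show ∑ m, η m * S q m r m s p = ∑ m, -(η m * S m q r m p s) from Finset.sum_congr rfl fun m _ => by rw [hanti q m r m s p, hef m q r m s p]; ring]; exact Finset.sum_neg_distrib _]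
    have hc48 : (∑ m, η m * S r m q m s p) = -(∑ m, η m * S m r q m p s) := by
      rw [show ∑ m, η m * S r m q m s p = -(∑ m, η m * S m r q m p s) from by rw [show ∑ m, η m * S r m q m s p = ∑ m, -(η m * S m r q m p s) from Finset.sum_congr rfl fun m _ => by rw [hanti r m q m s p, hef m r q m s p]; ring]; exact Finset.sum_neg_distrib _]
    have hc49 : (∑ m, η m * S p m r m s q) = -(∑ m, η m * S m p r m q s) := by
      rw [show ∑ m, η m * S p m r m s q = -(∑ m, η m * S m p r m q s) from by rw [show ∑ m, η m * S p m r m s q = ∑ m, -(η m * S m p r m q s) from Finset.sum_congr rfl fun m _ => by rw [hanti p m r m s q, hef m p r m s q]; ring]; exact Finset.sum_neg_distrib _]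
    have hc50 : (∑ m, η m * S r m p m s q) = -(∑ m, η m * S m r p m q s) := by
      rw [show ∑ m, η m * S r m p m s q = -(∑ m, η m * S m r p m q s) from by rw [show ∑ m, η m * S r m p m s q = ∑ m, -(η m * S m r p m q s) from Finset.sum_congr rfl fun m _ => by rw [hanti r m p m s q, hef m r p m s q]; ring]; exact Finset.sum_neg_distrib _]
    have hc51 : (∑ m, η m * (∑ k, η k * S q k m k s m)) = -(∑ m, η m * (∑ k, η k * S m q k m k s)) := by
      rw [show ∑ m, η m * (∑ k, η k * S q k m k s m) = -(∑ m, η m * (∑ k, η k * S k q m k m s)) from by rw [show ∑ m, η m * (∑ k, η k * S q k m k s m) = ∑ m, -(η m * (∑ k, η k * S k q m k m s)) from Finset.sum_congr rfl fun m _ => by rw [show ∑ k, η k * S q k m k s m = -(∑ k, η k * S k q m k m s) from by rw [show ∑ k, η k * S q k m k s m = ∑ k, -(η k * S k q m k m s) from Finset.sum_congr rfl fun k _ => by rw [hanti q k m k s m, hef k q m k s m]; ring]; exact Finset.sum_neg_distrib _]; ring]; exact Finset.sum_neg_distrib _,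
          show ∑ m, η m * (∑ k, η k * S k q m k m s) = ∑ m, η m * (∑ k, η k * S m q k m k s) from by rw [swap_sum η]]
    have hc52 : (∑ m, η m * (∑ k, η k * S m k q k s m)) = (0:ℝ) := by
      have e1 : (∑ m, η m * (∑ k, η k * S m k q k s m)) = -(∑ m, η m * (∑ k, η k * S k m q m s k)) := show ∑ m, η m * (∑ k, η k * S m k q k s m) = -(∑ m, η m * (∑ k, η k * S k m q m s k)) from by rw [show ∑ m, η m * (∑ k, η k * S m k q k s m) = ∑ m, -(η m * (∑ k, η k * S k m q m s k)) from Finset.sum_congr rfl fun m _ => by rw [show ∑ k, η k * S m k q k s m = -(∑ k, η k * S k m q m s k) from by rw [show ∑ k, η k * S m k q k s m = ∑ k, -(η k * S k m q m s k) from Finset.sum_congr rfl fun k _ => by rw [hanti m k q k s m, hef k m q k s m, hde k m q k m s, hef k m q m k s]; ring]; exact Finset.sum_neg_distrib _]; ring]; exact Finset.sum_neg_distrib _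
      have e2 : (∑ m, η m * (∑ k, η k * S k m q m s k)) = (∑ m, η m * (∑ k, η k * S m k q k s m)) := by
        rw [show ∑ m, η m * (∑ k, η k * S k m q m s k) = ∑ m, η m * (∑ k, η k * S m k q k s m) from by rw [swap_sum η]]
      rw [e2] at e1
      linarith
    have hc53 : (∑ m, η m * (∑ k, η k * S p k m k s m)) = -(∑ m, η m * (∑ k, η k * S m p k m k s)) := by
      rw [show ∑ m, η m * (∑ k, η k * S p k m k s m) = -(∑ m, η m * (∑ k, η k * S k p m k m s)) from by rw [show ∑ m, η m * (∑ k, η k * S p k m k s m) = ∑ m, -(η m * (∑ k, η k * S k p m k m s)) from Finset.sum_congr rfl fun m _ => by rw [show ∑ k, η k * S p k m k s m = -(∑ k, η k * S k p m k m s) from by rw [show ∑ k, η k * S p k m k s m = ∑ k, -(η k * S k p m k m s) from Finset.sum_congr rfl fun k _ => by rw [hanti p k m k s m, hef k p m k s m]; ring]; exact Finset.sum_neg_distrib _]; ring]; exact Finset.sum_neg_distrib _,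
          show ∑ m, η m * (∑ k, η k * S k p m k m s) = ∑ m, η m * (∑ k, η k * S m p k m k s) from by rw [swap_sum η]]
    have hc54 : (∑ m, η m * (∑ k, η k * S m k p k s m)) = (0:ℝ) := by
      have e1 : (∑ m, η m * (∑ k, η k * S m k p k s m)) = -(∑ m, η m * (∑ k, η k * S k m p m s k)) := show ∑ m, η m * (∑ k, η k * S m k p k s m) = -(∑ m, η m * (∑ k, η k * S k m p m s k)) from by rw [show ∑ m, η m * (∑ k, η k * S m k p k s m) = ∑ m, -(η m * (∑ k, η k * S k m p m s k)) from Finset.sum_congr rfl fun m _ => by rw [show ∑ k, η k * S m k p k s m = -(∑ k, η k * S k m p m s k) from by rw [show ∑ k, η k * S m k p k s m = ∑ k, -(η k * S k m p m s k) from Finset.sum_congr rfl fun k _ => by rw [hanti m k p k s m, hef k m p k s m, hde k m p k m s, hef k m p m k s]; ring]; exact Finset.sum_neg_distrib _]; ring]; exact Finset.sum_neg_distrib _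
      have e2 : (∑ m, η m * (∑ k, η k * S k m p m s k)) = (∑ m, η m * (∑ k, η k * S m k p k s m)) := by
        rw [show ∑ m, η m * (∑ k, η k * S k m p m s k) = ∑ m, η m * (∑ k, η k * S m k p k s m) from by rw [swap_sum η]]
      rw [e2] at e1
      linarith
    rw [show (∑ i, η i * Fm n η S p q i r s i) = ∑ i, ((η i * S p q i r s i) - (η i * S p q r i s i) + (η i * S i r p q s i) - (η i * S i r q p s i) - ((1/((n:ℝ)-2))) * (η i * (gm η p i * (∑ m, η m * S q m r m s i))) - ((1/((n:ℝ)-2))) * (η i * (gm η p i * (∑ m, η m * S r m q m s i))) + ((1/((n:ℝ)-2))) * (η i * (gm η q i * (∑ m, η m * S p m r m s i))) + ((1/((n:ℝ)-2))) * (η i * (gm η q i * (∑ m, η m * S r m p m s i))) + ((1/((n:ℝ)-2)) * gm η p r) * (η i * (∑ m, η m * S q m i m s i)) + ((1/((n:ℝ)-2)) * gm η p r) * (η i * (∑ m, η m * S i m q m s i)) - ((1/((n:ℝ)-2)) * gm η q r) * (η i * (∑ m, η m * S p m i m s i)) - ((1/((n:ℝ)-2)) * gm η q r) * (η i * (∑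 m, η m * S i m p m s i))) from Finset.sum_congr rfl fun i _ => by simp only [Fm]; rw [hTsplit q r s i, hTsplit p r s i, hTsplit q i s i, hTsplit p i s i]; ring]
    simp only [Finset.sum_add_distrib, Finset.sum_sub_distrib, Finset.sum_neg_distrib, ← Finset.mul_sum]
    simp only [col1 hη, diagsum hη, hc43, hc44, hc45, hc46, hc47, hc48, hc49, hc50, hc51, hc52, hc53, hc54]
    ring
  have E64 : ∀ p q r s : Fin n, (∑ i, η i * Fm n η S p q r i s i) = (∑ m, η m * S p q r m m s) - (∑ m, η m * S p q m m r s) - (∑ m, η m * S m r p m q s) + (∑ m, η m * S m r q m p s) + ((1/((n:ℝ)-2)) * gm η p r) * (∑ m, η m * (∑ k, η k * S m q k m k s)) - ((1/((n:ℝ)-2)) * gm η q r) * (∑ m, η m * (∑ k, η k * S m p k m k s)) - ((1/((n:ℝ)-2))) * (∑ m, η m * S m q r m p s) - ((1/((n:ℝ)-2))) * (∑ m, η m * S m r q m p s) + ((1/((n:ℝ)-2))) * (∑ m, η m * S m p r m q s) + ((1/((n:ℝ)-2))) * (∑ m, η m * S m r p m q s) := by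
    intro p q r s
    have hc55 : (∑ m, η m * S p q r m s m) = (∑ m, η m * S p q r m m s) := by
      rw [show ∑ m, η m * S p q r m s m = ∑ m, η m * S p q r m m s from Finset.sum_congr rfl fun m _ => by rw [hef p q r m s m]]
    have hc56 : (∑ m, η m * S p q m r s m) = (∑ m, η m * S p q m m r s) := by
      rw [show ∑ m, η m * S p q m r s m = ∑ m, η m * S p q m m r s from Finset.sum_congr rfl fun m _ => by rw [hef p q m r s m, hde p q m r m s]]
    have hc57 : (∑ m, η m * S r m p q s m) = -(∑ m, η m * S m r p m q s) := by
      rw [show ∑ m, η m * S r m p q s m = -(∑ m, η m * S m r p m q s) from by rw [show ∑ m, η m * S r m p q s m = ∑ m, -(η m * S m r p m q s) from Finset.sum_congr rfl fun m _ => by rw [hanti r m p q s m, hef m r p q s m, hde m r p q m s]; ring]; exact Finset.sum_neg_distrib _]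
    have hc58 : (∑ m, η m * S r m q p s m) = -(∑ m, η m * S m r q m p s) := by
      rw [show ∑ m, η m * S r m q p s m = -(∑ m, η m * S m r q m p s) from by rw [show ∑ m, η m * S r m q p s m = ∑ m, -(η m * S m r q m p s) from Finset.sum_congr rfl fun m _ => by rw [hanti r m q p s m, hef m r q p s m, hde m r q p m s]; ring]; exact Finset.sum_neg_distrib _]
    have hc59 : (∑ m, η m * (∑ k, η k * S q k m k s m)) = -(∑ m, η m * (∑ k, η k * S m q k m k s)) := by
      rw [show ∑ m, η m * (∑ k, η k * S q k m k s m) = -(∑ m, η m * (∑ k, η k * S k q m k m s)) from by rw [show ∑ m, η m * (∑ k, η k * S q k m k s m) = ∑ m, -(η m * (∑ k, η k * S k q m k m s)) from Finset.sum_congr rfl fun m _ => by rw [show ∑ k, η k * S q k m k s m = -(∑ k, η k * S k q m k m s) from by rw [show ∑ k, η k * S q k m k s m = ∑ k, -(η k * S k q m k m s) from Finset.sum_congr rfl fun k _ => by rw [hanti q k m k s m, hef k q m k s m]; ring]; exact Finset.sum_neg_distrib _]; ring]; exact Finset.sum_neg_distrib _,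
          show ∑ m, η m * (∑ k, η k * S k q m k m s) = ∑ m, η m * (∑ k, η k * S m q k m k s) from by rw [swap_sum η]]
    have hc60 : (∑ m, η m * (∑ k, η k * S m k q k s m)) = (0:ℝ) := by
      have e1 : (∑ m, η m * (∑ k, η k * S m k q k s m)) = -(∑ m, η m * (∑ k, η k * S k m q m s k)) := show ∑ m, η m * (∑ k, η k * S m k q k s m) = -(∑ m, η m * (∑ k, η k * S k m q m s k)) from by rw [show ∑ m, η m * (∑ k, η k * S m k q k s m) = ∑ m, -(η m * (∑ k, η k * S k m q m s k)) from Finset.sum_congr rfl fun m _ => by rw [show ∑ k, η k * S m k q k s m = -(∑ k, η k * S k m q m s k) from by rw [show ∑ k, η k * S m k q k s m = ∑ k, -(η k * S k m q m s k) from Finset.sum_congr rfl fun k _ => by rw [hanti m k q k s m, hef k m q k s m, hde k m q k m s, hef k m q m k s]; ring]; exact Finset.sum_neg_distrib _]; ring]; exact Finset.sum_neg_distrib _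
      have e2 : (∑ m, η m * (∑ k, η k * S k m q m s k)) = (∑ m, η m * (∑ k, η k * S m k q k s m)) := by
        rw [show ∑ m, η m * (∑ k, η k * S k m q m s k) = ∑ m, η m * (∑ k, η k * S m k q k s m) from by rw [swap_sum η]]
      rw [e2] at e1
      linarith
    have hc61 : (∑ m, η m * (∑ k, η k * S p k m k s m)) = -(∑ m, η m * (∑ k, η k * S m p k m k s)) := by
      rw [show ∑ m, η m * (∑ k, η k * S p k m k s m) = -(∑ m, η m * (∑ k, η k * S k p m k m s)) from by rw [show ∑ m, η m * (∑ k, η k * S p k m k s m) = ∑ m, -(η m * (∑ k, η k * S k p m k m s)) from Finset.sum_congr rfl fun m _ => by rw [show ∑ k, η k * S p k m k s m = -(∑ k, η k * S k p m k m s) from by rw [show ∑ k, η k * S p k m k s m = ∑ k, -(η k * S k p m k m s) from Finset.sum_congr rfl fun k _ => by rw [hanti p k m k s m, hef k p m k s m]; ring]; exact Finset.sum_neg_distrib _]; ring]; exact Finset.sum_neg_distrib _,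
          show ∑ m, η m * (∑ k, η k * S k p m k m s) = ∑ m, η m * (∑ k, η k * S m p k m k s) from by rw [swap_sum η]]
    have hc62 : (∑ m, η m * (∑ k, η k * S m k p k s m)) = (0:ℝ) := by
      have e1 : (∑ m, η m * (∑ k, η k * S m k p k s m)) = -(∑ m, η m * (∑ k, η k * S k m p m s k)) := show ∑ m, η m * (∑ k, η k * S m k p k s m) = -(∑ m, η m * (∑ k, η k * S k m p m s k)) from by rw [show ∑ m, η m * (∑ k, η k * S m k p k s m) = ∑ m, -(η m * (∑ k, η k * S k m p m s k)) from Finset.sum_congr rfl fun m _ => by rw [show ∑ k, η k * S m k p k s m = -(∑ k, η k * S k m p m s k) from by rw [show ∑ k, η k * S m k p k s m = ∑ k, -(η k * S k m p m s k) from Finset.sum_congr rfl fun k _ => by rw [hanti m k p k s m, hef k m p k s m, hde k m p k m s, hef k m p m k s]; ring]; exact Finset.sum_neg_distrib _]; ring]; exact Finset.sum_neg_distrib _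
      have e2 : (∑ m, η m * (∑ k, η k * S k m p m s k)) = (∑ m, η m * (∑ k, η k * S m k p k s m)) := by
        rw [show ∑ m, η m * (∑ k, η k * S k m p m s k) = ∑ m, η m * (∑ k, η k * S m k p k s m) from by rw [swap_sum η]]
      rw [e2] at e1
      linarith
    have hc63 : (∑ m, η m * S q m r m s p) = -(∑ m, η m * S m q r m p s) := by
      rw [show ∑ m, η m * S q m r m s p = -(∑ m, η m * S m q r m p s) from by rw [show ∑ m, η m * S q m r m s p = ∑ m, -(η m * S m q r m p s) from Finset.sum_congr rfl fun m _ => by rw [hanti q m r m s p, hef m q r m s p]; ring]; exact Finset.sum_neg_distrib _]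
    have hc64 : (∑ m, η m * S r m q m s p) = -(∑ m, η m * S m r q m p s) := by
      rw [show ∑ m, η m * S r m q m s p = -(∑ m, η m * S m r q m p s) from by rw [show ∑ m, η m * S r m q m s p = ∑ m, -(η m * S m r q m p s) from Finset.sum_congr rfl fun m _ => by rw [hanti r m q m s p, hef m r q m s p]; ring]; exact Finset.sum_neg_distrib _]
    have hc65 : (∑ m, η m * S p m r m s q) = -(∑ m, η m * S m p r m q s) := by
      rw [show ∑ m, η m * S p m r m s q = -(∑ m, η m * S m p r m q s) from by rw [show ∑ m, η m * S p m r m s q = ∑ m, -(η m * S m p r m q s) from Finset.sum_congr rfl fun m _ => by rw [hanti p m r m s q, hef m p r m s q]; ring]; exact Finset.sum_neg_distrib _]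
    have hc66 : (∑ m, η m * S r m p m s q) = -(∑ m, η m * S m r p m q s) := by
      rw [show ∑ m, η m * S r m p m s q = -(∑ m, η m * S m r p m q s) from by rw [show ∑ m, η m * S r m p m s q = ∑ m, -(η m * S m r p m q s) from Finset.sum_congr rfl fun m _ => by rw [hanti r m p m s q, hef m r p m s q]; ring]; exact Finset.sum_neg_distrib _]
    rw [show (∑ i, η i * Fm n η S p q r i s i) = ∑ i, ((η i * S p q r i s i) - (η i * S p q i r s i) + (η i * S r i p q s i) - (η i * S r i q p s i) - ((1/((n:ℝ)-2)) * gm η p r) * (η i * (∑ m, η m * S q m i m s i)) - ((1/((n:ℝ)-2)) * gm η p r) * (η i * (∑ m, η m * S i m q m s i)) + ((1/((n:ℝ)-2)) * gm η q r) * (η i * (∑ m, η m * S p m i m s i)) + ((1/((n:ℝ)-2)) * gm η q r) * (η i * (∑ m, η m * S i m p m s i)) + ((1/((n:ℝ)-2))) * (η i * (gm η p i * (∑ m, η m * S q m r m s i))) + ((1/((n:ℝ)-2))) * (η i * (gm η p i * (∑ m, η m * S r m q m s i))) - ((1/((n:ℝ)-2))) * (η i * (gm η q i * (∑ m, η m *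 S p m r m s i))) - ((1/((n:ℝ)-2))) * (η i * (gm η q i * (∑ m, η m * S r m p m s i)))) from Finset.sum_congr rfl fun i _ => by simp only [Fm]; rw [hTsplit q i s i, hTsplit p i s i, hTsplit q r s i, hTsplit p r s i]; ring]
    simp only [Finset.sum_add_distrib, Finset.sum_sub_distrib, Finset.sum_neg_distrib, ← Finset.mul_sum]
    simp only [col1 hη, diagsum hη, hc55, hc56, hc57, hc58, hc59, hc60, hc61, hc62, hc63, hc64, hc65, hc66]
    ring
  have E65 : ∀ p q r s : Fin n, (∑ i, η i * Fm n η S p q r s i i) = (∑ m, η m * S p q r m m s) - (∑ m, η m * S p q s m m r) + (∑ m, η m * S r s p m m q) - (∑ m, η m * S r s q m m p) + ((1/((n:ℝ)-2)) * gm η p r) * (∑ m, η m * (∑ k, η k * S m q s m k k)) + ((1/((n:ℝ)-2)) * gm η p r) * (∑ m, η m * (∑ k, η k * S m s q m k k)) - ((1/((n:ℝ)-2)) * gm η q r) * (∑ m, η m * (∑ k, η k * S m p s m k k)) - ((1/((n:ℝ)-2)) * gm η q r) * (∑ m, η m * (∑ k, η k * S m s p m k k)) - ((1/((n:ℝ)-2))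 * gm η p s) * (∑ m, η m * (∑ k, η k * S m q r m k k)) - ((1/((n:ℝ)-2)) * gm η p s) * (∑ m, η m * (∑ k, η k * S m r q m k k)) + ((1/((n:ℝ)-2)) * gm η q s) * (∑ m, η m * (∑ k, η k * S m p r m k k)) + ((1/((n:ℝ)-2)) * gm η q s) * (∑ m, η m * (∑ k, η k * S m r p m k k)) := by
    intro p q r s
    have hc67 : (∑ m, η m * S p q r s m m) = (∑ m, η m * S p q r m m s) := by
      rw [show ∑ m, η m * S p q r s m m = ∑ m, η m * S p q r m m s from Finset.sum_congr rfl fun m _ => by rw [hde p q r s m m, hef p q r m s m]]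
    have hc68 : (∑ m, η m * S p q s r m m) = (∑ m, η m * S p q s m m r) := by
      rw [show ∑ m, η m * S p q s r m m = ∑ m, η m * S p q s m m r from Finset.sum_congr rfl fun m _ => by rw [hde p q s r m m, hef p q s m r m]]
    have hc69 : (∑ m, η m * S r s p q m m) = (∑ m, η m * S r s p m m q) := by
      rw [show ∑ m, η m * S r s p q m m = ∑ m, η m * S r s p m m q from Finset.sum_congr rfl fun m _ => by rw [hde r s p q m m, hef r s p m q m]]
    have hc70 : (∑ m, η m * S r s q p m m) = (∑ m, η m * S r s q m m p) := by
      rw [show ∑ m, η m * S r s q p m m = ∑ m, η m * S r s q m m p from Finset.sum_congr rfl fun m _ => by rw [hde r s q p m m, hef r s q m p m]]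
    have hc71 : (∑ m, η m * (∑ k, η k * S q k s k m m)) = -(∑ m, η m * (∑ k, η k * S m q s m k k)) := by
      rw [show ∑ m, η m * (∑ k, η k * S q k s k m m) = -(∑ m, η m * (∑ k, η k * S k q s k m m)) from by rw [show ∑ m, η m * (∑ k, η k * S q k s k m m) = ∑ m, -(η m * (∑ k, η k * S k q s k m m)) from Finset.sum_congr rfl fun m _ => by rw [show ∑ k, η k * S q k s k m m = -(∑ k, η k * S k q s k m m) from by rw [show ∑ k, η k * S q k s k m m = ∑ k, -(η k * S k q s k m m) from Finset.sum_congr rfl fun k _ => by rw [hanti q k s k m m]; ring]; exact Finset.sum_neg_distrib _]; ring]; exact Finset.sum_neg_distrib _,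
          show ∑ m, η m * (∑ k, η k * S k q s k m m) = ∑ m, η m * (∑ k, η k * S m q s m k k) from by rw [swap_sum η]]
    have hc72 : (∑ m, η m * (∑ k, η k * S s k q k m m)) = -(∑ m, η m * (∑ k, η k * S m s q m k k)) := by
      rw [show ∑ m, η m * (∑ k, η k * S s k q k m m) = -(∑ m, η m * (∑ k, η k * S k s q k m m)) from by rw [show ∑ m, η m * (∑ k, η k * S s k q k m m) = ∑ m, -(η m * (∑ k, η k * S k s q k m m)) from Finset.sum_congr rfl fun m _ => by rw [show ∑ k, η k * S s k q k m m = -(∑ k, η k * S k s q k m m) from by rw [show ∑ k, η k * S s k q k m m = ∑ k, -(η k * S k s q k m m) from Finset.sum_congr rfl fun k _ => by rw [hanti s k q k m m]; ring]; exact Finset.sum_neg_distrib _]; ring]; exact Finset.sum_neg_distrib _,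
          show ∑ m, η m * (∑ k, η k * S k s q k m m) = ∑ m, η m * (∑ k, η k * S m s q m k k) from by rw [swap_sum η]]
    have hc73 : (∑ m, η m * (∑ k, η k * S p k s k m m)) = -(∑ m, η m * (∑ k, η k * S m p s m k k)) := by
      rw [show ∑ m, η m * (∑ k, η k * S p k s k m m) = -(∑ m, η m * (∑ k, η k * S k p s k m m)) from by rw [show ∑ m, η m * (∑ k, η k * S p k s k m m) = ∑ m, -(η m * (∑ k, η k * S k p s k m m)) from Finset.sum_congr rfl fun m _ => by rw [show ∑ k, η k * S p k s k m m = -(∑ k, η k * S k p s k m m) from by rw [show ∑ k, η k * S p k s k m m = ∑ k, -(η k * S k p s k m m) from Finset.sum_congr rfl fun k _ => by rw [hanti p k s k m m]; ring]; exact Finset.sum_neg_distrib _]; ring]; exact Finset.sum_neg_distrib _,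
          show ∑ m, η m * (∑ k, η k * S k p s k m m) = ∑ m, η m * (∑ k, η k * S m p s m k k) from by rw [swap_sum η]]
    have hc74 : (∑ m, η m * (∑ k, η k * S s k p k m m)) = -(∑ m, η m * (∑ k, η k * S m s p m k k)) := by
      rw [show ∑ m, η m * (∑ k, η k * S s k p k m m) = -(∑ m, η m * (∑ k, η k * S k s p k m m)) from by rw [show ∑ m, η m * (∑ k, η k * S s k p k m m) = ∑ m, -(η m * (∑ k, η k * S k s p k m m)) from Finset.sum_congr rfl fun m _ => by rw [show ∑ k, η k * S s k p k m m = -(∑ k, η k * S k s p k m m) from by rw [show ∑ k, η k * S s k p k m m = ∑ k, -(η k * S k s p k m m) from Finset.sum_congr rfl fun k _ => by rw [hanti s k p k m m]; ring]; exact Finset.sum_neg_distrib _]; ring]; exact Finset.sum_neg_distrib _,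
          show ∑ m, η m * (∑ k, η k * S k s p k m m) = ∑ m, η m * (∑ k, η k * S m s p m k k) from by rw [swap_sum η]]
    have hc75 : (∑ m, η m * (∑ k, η k * S q k r k m m)) = -(∑ m, η m * (∑ k, η k * S m q r m k k)) := by
      rw [show ∑ m, η m * (∑ k, η k * S q k r k m m) = -(∑ m, η m * (∑ k, η k * S k q r k m m)) from by rw [show ∑ m, η m * (∑ k, η k * S q k r k m m) = ∑ m, -(η m * (∑ k, η k * S k q r k m m)) from Finset.sum_congr rfl fun m _ => by rw [show ∑ k, η k * S q k r k m m = -(∑ k, η k * S k q r k m m) from by rw [show ∑ k, η k * S q k r k m m = ∑ k, -(η k * S k q r k m m) from Finset.sum_congr rfl fun k _ => by rw [hanti q k r k m m]; ring]; exact Finset.sum_neg_distrib _]; ring]; exact Finset.sum_neg_distrib _,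
          show ∑ m, η m * (∑ k, η k * S k q r k m m) = ∑ m, η m * (∑ k, η k * S m q r m k k) from by rw [swap_sum η]]
    have hc76 : (∑ m, η m * (∑ k, η k * S r k q k m m)) = -(∑ m, η m * (∑ k, η k * S m r q m k k)) := by
      rw [show ∑ m, η m * (∑ k, η k * S r k q k m m) = -(∑ m, η m * (∑ k, η k * S k r q k m m)) from by rw [show ∑ m, η m * (∑ k, η k * S r k q k m m) = ∑ m, -(η m * (∑ k, η k * S k r q k m m)) from Finset.sum_congr rfl fun m _ => by rw [show ∑ k, η k * S r k q k m m = -(∑ k, η k * S k r q k m m) from by rw [show ∑ k, η k * S r k q k m m = ∑ k, -(η k * S k r q k m m) from Finset.sum_congr rfl fun k _ => by rw [hanti r k q k m m]; ring]; exact Finset.sum_neg_distrib _]; ring]; exact Finset.sum_neg_distrib _,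
          show ∑ m, η m * (∑ k, η k * S k r q k m m) = ∑ m, η m * (∑ k, η k * S m r q m k k) from by rw [swap_sum η]]
    have hc77 : (∑ m, η m * (∑ k, η k * S p k r k m m)) = -(∑ m, η m * (∑ k, η k * S m p r m k k)) := by
      rw [show ∑ m, η m * (∑ k, η k * S p k r k m m) = -(∑ m, η m * (∑ k, η k * S k p r k m m)) from by rw [show ∑ m, η m * (∑ k, η k * S p k r k m m) = ∑ m, -(η m * (∑ k, η k * S k p r k m m)) from Finset.sum_congr rfl fun m _ => by rw [show ∑ k, η k * S p k r k m m = -(∑ k, η k * S k p r k m m) from by rw [show ∑ k, η k * S p k r k m m = ∑ k, -(η k * S k p r k m m) from Finset.sum_congr rfl fun k _ => by rw [hanti p k r k m m]; ring]; exact Finset.sum_neg_distrib _]; ring]; exact Finset.sum_neg_distrib _,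
          show ∑ m, η m * (∑ k, η k * S k p r k m m) = ∑ m, η m * (∑ k, η k * S m p r m k k) from by rw [swap_sum η]]
    have hc78 : (∑ m, η m * (∑ k, η k * S r k p k m m)) = -(∑ m, η m * (∑ k, η k * S m r p m k k)) := by
      rw [show ∑ m, η m * (∑ k, η k * S r k p k m m) = -(∑ m, η m * (∑ k, η k * S k r p k m m)) from by rw [show ∑ m, η m * (∑ k, η k * S r k p k m m) = ∑ m, -(η m * (∑ k, η k * S k r p k m m)) from Finset.sum_congr rfl fun m _ => by rw [show ∑ k, η k * S r k p k m m = -(∑ k, η k * S k r p k m m) from by rw [show ∑ k, η k * S r k p k m m = ∑ k, -(η k * S k r p k m m) from Finset.sum_congr rfl fun k _ => by rw [hanti r k p k m m]; ring]; exact Finset.sum_neg_distrib _]; ring]; exact Finset.sum_neg_distrib _,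
          show ∑ m, η m * (∑ k, η k * S k r p k m m) = ∑ m, η m * (∑ k, η k * S m r p m k k) from by rw [swap_sum η]]
    rw [show (∑ i, η i * Fm n η S p q r s i i) = ∑ i, ((η i * S p q r s i i) - (η i * S p q s r i i) + (η i * S r s p q i i) - (η i * S r s q p i i) - ((1/((n:ℝ)-2)) * gm η p r) * (η i * (∑ m, η m * S q m s m i i)) - ((1/((n:ℝ)-2)) * gm η p r) * (η i * (∑ m, η m * S s m q m i i)) + ((1/((n:ℝ)-2)) * gm η q r) * (η i * (∑ m, η m * S p m s m i i)) + ((1/((n:ℝ)-2)) * gm η q r) * (η i * (∑ m, η m * S s m p m i i)) + ((1/((n:ℝ)-2)) * gm η p s) * (η i * (∑ m, η m * S q m r m i i)) + ((1/((n:ℝ)-2)) * gm η p s) * (η i * (∑ m, η m * S r m q m i i)) - ((1/((n:ℝ)-2)) * gm η q s) * (η i * (∑ m, η m * S p m r m i i)) - ((1/((n:ℝ)-2)) * gm η q s) * (η i * (∑ m, η m * S r m p m i i))) from Finset.sum_congr rfl fun i _ => by simp only [Fm]; rw [hTsplit q s i i, hTsplit p s i i, hTsplit q r i i, hTsplit p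 r i i]; ring]
    simp only [Finset.sum_add_distrib, Finset.sum_sub_distrib, Finset.sum_neg_distrib, ← Finset.mul_sum]
    simp only [hc67, hc68, hc69, hc70, hc71, hc72, hc73, hc74, hc75, hc76, hc77, hc78]
    ring
  have EDD : ∀ p q, (∑ i, ∑ j, η i * η j * Fm n η S p i q j i j) = -((∑ m, η m * (∑ k, η k * S m p q m k k))) + (∑ m, η m * (∑ k, η k * S m p k m k q)) - (∑ m, η m * (∑ k, η k * S m q p m k k)) + (∑ m, η m * (∑ k, η k * S m q k m k p)) - ((1/((n:ℝ)-2))) * (∑ m, η m * (∑ k, η k * S m p k m k q)) - ((1/((n:ℝ)-2))) * (∑ m, η m * (∑ k, η k * S m q k m k p)) + ((1/((n:ℝ)-2))) * (∑ m, η m * (∑ k, η k * S m p q m k k)) + ((1/((n:ℝ)-2))) * (∑ m, η m * (∑ k, η k * S m q p m k k)) := by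
    intro p q
    have hc79 : (∑ m, η m * (∑ k, η k * S p m q k k m)) = -(∑ m, η m * (∑ k, η k * S m p q m k k)) := by
      rw [show ∑ m, η m * (∑ k, η k * S p m q k k m) = -(∑ m, η m * (∑ k, η k * S m p q m k k)) from by rw [show ∑ m, η m * (∑ k, η k * S p m q k k m) = ∑ m, -(η m * (∑ k, η k * S m p q m k k)) from Finset.sum_congr rfl fun m _ => by rw [show ∑ k, η k * S p m q k k m = -(∑ k, η k * S m p q m k k) from by rw [show ∑ k, η k * S p m q k k m = ∑ k, -(η k * S m p q m k k) from Finset.sum_congr rfl fun k _ => by rw [hanti p m q k k m, hef m p q k k m, hde m p q k m k]; ring]; exact Finset.sum_neg_distrib _]; ring]; exact Finset.sum_neg_distrib _]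
    have hc80 : (∑ m, η m * (∑ k, η k * S p m k k q m)) = -(∑ m, η m * (∑ k, η k * S m p k m k q)) := by
      rw [show ∑ m, η m * (∑ k, η k * S p m k k q m) = -(∑ m, η m * (∑ k, η k * S m p k m k q)) from by rw [show ∑ m, η m * (∑ k, η k * S p m k k q m) = ∑ m, -(η m * (∑ k, η k * S m p k m k q)) from Finset.sum_congr rfl fun m _ => by rw [show ∑ k, η k * S p m k k q m = -(∑ k, η k * S m p k m k q) from by rw [show ∑ k, η k * S p m k k q m = ∑ k, -(η k * S m p k m k q) from Finset.sum_congr rfl fun k _ => by rw [hanti p m k k q m, hef m p k k q m, hde m p k k m q]; ring]; exact Finset.sum_neg_distrib _]; ring]; exact Finset.sum_neg_distrib _]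
    have hc81 : (∑ m, η m * (∑ k, η k * S k q p k m m)) = (∑ m, η m * (∑ k, η k * S m q p m k k)) := by
      rw [show ∑ m, η m * (∑ k, η k * S k q p k m m) = ∑ m, η m * (∑ k, η k * S m q p m k k) from by rw [swap_sum η]]
    have hc82 : (∑ m, η m * (∑ k, η k * S k q m k p m)) = (∑ m, η m * (∑ k, η k * S m q k m k p)) := by
      rw [show ∑ m, η m * (∑ k, η k * S k q m k p m) = ∑ m, η m * (∑ k, η k * S k q m k m p) from Finset.sum_congr rfl fun m _ => by rw [show ∑ k, η k * S k q m k p m = ∑ k, η k * S k q m k m p from Finset.sum_congr rfl fun k _ => by rw [hef k q m k p m]],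
          show ∑ m, η m * (∑ k, η k * S k q m k m p) = ∑ m, η m * (∑ k, η k * S m q k m k p) from by rw [swap_sum η]]
    have hc83 : (∑ m, η m * (∑ k, η k * (∑ l, η l * S k m l k l m))) = (0:ℝ) := by
      have e1 : (∑ m, η m * (∑ k, η k * (∑ l, η l * S k m l k l m))) = -(∑ m, η m * (∑ k, η k * (∑ l, η l * S m k l m l k))) := show ∑ m, η m * (∑ k, η k * (∑ l, η l * S k m l k l m)) = -(∑ m, η m * (∑ k, η k * (∑ l, η l * S m k l m l k))) from by rw [show ∑ m, η m * (∑ k, η k * (∑ l, η l * S k m l k l m)) = ∑ m, -(η m * (∑ k, η k * (∑ l, η l * S m k l m l k))) from Finset.sum_congr rfl fun m _ => by rw [show ∑ k, η k * (∑ l, η l * S k m l k l m) = -(∑ k, η k * (∑ l, η l * S m k l m l k)) from by rw [show ∑ k, η k * (∑ l, η l * S k m l k l m) = ∑ k, -(η k * (∑ l, η l * S m k l m l k)) from Finset.sum_congr rfl fun k _ => by rw [show ∑ l, η l * S k m l k l m = -(∑ l, η l * S m k l m l k) from by rw [show ∑ l, η l * S k m l k l m = ∑ l, -(η l * S m k l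 m l k) from Finset.sum_congr rfl fun l _ => by rw [hanti k m l k l m, hef m k l k l m, hde m k l k m l, hef m k l m k l]; ring]; exact Finset.sum_neg_distrib _]; ring]; exact Finset.sum_neg_distrib _]; ring]; exact Finset.sum_neg_distrib _
      have e2 : (∑ m, η m * (∑ k, η k * (∑ l, η l * S m k l m l k))) = (∑ m, η m * (∑ k, η k * (∑ l, η l * S k m l k l m))) := by
        rw [show ∑ m, η m * (∑ k, η k * (∑ l, η l * S m k l m l k)) = ∑ m, η m * (∑ k, η k * (∑ l, η l * S k m l k l m)) from by rw [swap_sum η]]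
      rw [e2] at e1
      linarith
    have hc84 : (∑ m, η m * (∑ k, η k * S k m q k p m)) = (0:ℝ) := by
      have e1 : (∑ m, η m * (∑ k, η k * S k m q k p m)) = -(∑ m, η m * (∑ k, η k * S m k q m p k)) := show ∑ m, η m * (∑ k, η k * S k m q k p m) = -(∑ m, η m * (∑ k, η k * S m k q m p k)) from by rw [show ∑ m, η m * (∑ k, η k * S k m q k p m) = ∑ m, -(η m * (∑ k, η k * S m k q m p k)) from Finset.sum_congr rfl fun m _ => by rw [show ∑ k, η k * S k m q k p m = -(∑ k, η k * S m k q m p k) from by rw [show ∑ k, η k * S k m q k p m = ∑ k, -(η k * S m k q m p k) from Finset.sum_congr rfl fun k _ => by rw [hanti k m q k p m, hef m k q k p m, hde m k q k m p, hef m k q m k p]; ring]; exact Finset.sum_neg_distrib _]; ring]; exact Finset.sum_neg_distrib _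
      have e2 : (∑ m, η m * (∑ k, η k * S m k q m p k)) = (∑ m, η m * (∑ k, η k * S k m q k p m)) := by
        rw [show ∑ m, η m * (∑ k, η k * S m k q m p k) = ∑ m, η m * (∑ k, η k * S k m q k p m) from by rw [swap_sum η]]
      rw [e2] at e1
      linarith
    have hc85 : (∑ m, η m * (∑ k, η k * S k p q k m m)) = (∑ m, η m * (∑ k, η k * S m p q m k k)) := by
      rw [show ∑ m, η m * (∑ k, η k * S k p q k m m) = ∑ m, η m * (∑ k, η k * S m p q m k k) from by rw [swap_sum η]]
    rw [show (∑ i, ∑ j, η i * η j * Fm n η S p i q j i j) = ∑ i, η i * ∑ j, η j * Fm n η S p i q j i j from Finset.sum_congr rfl fun i _ => by rw [Finset.mul_sum]; exact Finset.sum_congr rfl fun j _ => by ring]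
    rw [show (∑ i, η i * ∑ j, η j * Fm n η S p i q j i j) = ∑ i, η i * ((∑ m, η m * S p i q m m i) - (∑ m, η m * S p i m m q i) - (∑ m, η m * S m q p m i i) + (∑ m, η m * S m q i m p i) + ((1/((n:ℝ)-2)) * gm η p q) * (∑ m, η m * (∑ k, η k * S m i k m k i)) - ((1/((n:ℝ)-2)) * gm η i q) * (∑ m, η m * (∑ k, η k * S m p k m k i)) - ((1/((n:ℝ)-2))) * (∑ m, η m * S m i q m p i) - ((1/((n:ℝ)-2))) * (∑ m, η m * S m q i m p i) + ((1/((n:ℝ)-2))) * (∑ m, η m * S m p q m i i) + ((1/((n:ℝ)-2))) * (∑ m, η m * S m q p m i i)) from Finset.sum_congr rfl fun i _ => by rw [E64 p i q i]]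
    rw [show (∑ i, η i * ((∑ m, η m * S p i q m m i) - (∑ m, η m * S p i m m q i) - (∑ m, η m * S m q p m i i) + (∑ m, η m * S m q i m p i) + ((1/((n:ℝ)-2)) * gm η p q) * (∑ m, η m * (∑ k, η k * S m i k m k i)) - ((1/((n:ℝ)-2)) * gm η i q) * (∑ m, η m * (∑ k, η k * S m p k m k i)) - ((1/((n:ℝ)-2))) * (∑ m, η m * S m i q m p i) - ((1/((n:ℝ)-2))) * (∑ m, η m * S m q i m p i) + ((1/((n:ℝ)-2))) * (∑ m, η m * S m p q m i i) + ((1/((n:ℝ)-2))) * (∑ m, η m * S m q p m i i))) = ∑ i, ((η i * (∑ m, η m * S p i q m m i)) - (η i * (∑ m, η m * S p i m m q i)) - (η i * (∑ m, η m * S m q p m i i)) + (η i * (∑ m, η m * S m q i m p i)) + ((1/((n:ℝ)-2)) * gm η p q) * (η i * (∑ m, η m * (∑ k, η k * S m i k m k i))) - ((1/((n:ℝ)-2))) * (η i * (gm η q i * (∑ m, η m * (∑ k, η k * S m p k m k i)))) - ((1/((n:ℝ)-2))) * (η i * (∑ m, η m * S m i q m p i)) - ((1/((n:ℝ)-2)))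 * (η i * (∑ m, η m * S m q i m p i)) + ((1/((n:ℝ)-2))) * (η i * (∑ m, η m * S m p q m i i)) + ((1/((n:ℝ)-2))) * (η i * (∑ m, η m * S m q p m i i))) from Finset.sum_congr rfl fun i _ => by rw [gm_comm η i q]; ring]
    simp only [Finset.sum_add_distrib, Finset.sum_sub_distrib, Finset.sum_neg_distrib, ← Finset.mul_sum]
    simp only [col1 hη, diagsum hη, hc79, hc80, hc81, hc82, hc83, hc84, hc85]
    ring
  have hc87 : (∑ m, η m * S a m c m d b) = -(∑ m, η m * S m a c m b d) := by
    rw [show ∑ m, η m * S a m c m d b = -(∑ m, η m * S m a c m b d) from by rw [show ∑ m, η m * S a m c m d b = ∑ m, -(η m * S m a c m b d) from Finset.sum_congr rfl fun m _ => by rw [hanti a m c m d b, hef m a c m d b]; ring]; exact Finset.sum_neg_distrib _]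
  have hc88 : (∑ m, η m * S c m a m d b) = -(∑ m, η m * S m c a m b d) := by
    rw [show ∑ m, η m * S c m a m d b = -(∑ m, η m * S m c a m b d) from by rw [show ∑ m, η m * S c m a m d b = ∑ m, -(η m * S m c a m b d) from Finset.sum_congr rfl fun m _ => by rw [hanti c m a m d b, hef m c a m d b]; ring]; exact Finset.sum_neg_distrib _]
  have hr86 : (∑ i, η i * (S a i c i d b + S c i a i d b)) = -((∑ m, η m * S m a c m b d)) - (∑ m, η m * S m c a m b d) := by
    rw [show (∑ i, η i * (S a i c i d b + S c i a i d b)) = ∑ i, ((η i * S a i c i d b) + (η i * S c i a i d b)) from Finset.sum_congr rfl fun i _ => by ring]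
    simp only [Finset.sum_add_distrib, Finset.sum_sub_distrib, Finset.sum_neg_distrib, ← Finset.mul_sum]
    simp only [hc87, hc88]
    ring
  have hc90 : (∑ m, η m * S b m c m d a) = -(∑ m, η m * S m b c m a d) := by
    rw [show ∑ m, η m * S b m c m d a = -(∑ m, η m * S m b c m a d) from by rw [show ∑ m, η m * S b m c m d a = ∑ m, -(η m * S m b c m a d) from Finset.sum_congr rfl fun m _ => by rw [hanti b m c m d a, hef m b c m d a]; ring]; exact Finset.sum_neg_distrib _]
  have hc91 : (∑ m, η m * S c m b m d a) = -(∑ m, η m * S m c b m a d) := by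
    rw [show ∑ m, η m * S c m b m d a = -(∑ m, η m * S m c b m a d) from by rw [show ∑ m, η m * S c m b m d a = ∑ m, -(η m * S m c b m a d) from Finset.sum_congr rfl fun m _ => by rw [hanti c m b m d a, hef m c b m d a]; ring]; exact Finset.sum_neg_distrib _]
  have hr89 : (∑ i, η i * (S b i c i d a + S c i b i d a)) = -((∑ m, η m * S m b c m a d)) - (∑ m, η m * S m c b m a d) := by
    rw [show (∑ i, η i * (S b i c i d a + S c i b i d a)) = ∑ i, ((η i * S b i c i d a) + (η i * S c i b i d a)) from Finset.sum_congr rfl fun i _ => by ring]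
    simp only [Finset.sum_add_distrib, Finset.sum_sub_distrib, Finset.sum_neg_distrib, ← Finset.mul_sum]
    simp only [hc90, hc91]
    ring
  have hc93 : (∑ m, η m * S a m d m c b) = -(∑ m, η m * S m a d m b c) := by
    rw [show ∑ m, η m * S a m d m c b = -(∑ m, η m * S m a d m b c) from by rw [show ∑ m, η m * S a m d m c b = ∑ m, -(η m * S m a d m b c) from Finset.sum_congr rfl fun m _ => by rw [hanti a m d m c b, hef m a d m c b]; ring]; exact Finset.sum_neg_distrib _]
  have hc94 : (∑ m, η m * S d m a m c b) = -(∑ m, η m * S m d a m b c) := by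
    rw [show ∑ m, η m * S d m a m c b = -(∑ m, η m * S m d a m b c) from by rw [show ∑ m, η m * S d m a m c b = ∑ m, -(η m * S m d a m b c) from Finset.sum_congr rfl fun m _ => by rw [hanti d m a m c b, hef m d a m c b]; ring]; exact Finset.sum_neg_distrib _]
  have hr92 : (∑ i, η i * (S a i d i c b + S d i a i c b)) = -((∑ m, η m * S m a d m b c)) - (∑ m, η m * S m d a m b c) := by
    rw [show (∑ i, η i * (S a i d i c b + S d i a i c b)) = ∑ i, ((η i * S a i d i c b) + (η i * S d i a i c b)) from Finset.sum_congr rfl fun i _ => by ring]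
    simp only [Finset.sum_add_distrib, Finset.sum_sub_distrib, Finset.sum_neg_distrib, ← Finset.mul_sum]
    simp only [hc93, hc94]
    ring
  have hc96 : (∑ m, η m * S b m d m c a) = -(∑ m, η m * S m b d m a c) := by
    rw [show ∑ m, η m * S b m d m c a = -(∑ m, η m * S m b d m a c) from by rw [show ∑ m, η m * S b m d m c a = ∑ m, -(η m * S m b d m a c) from Finset.sum_congr rfl fun m _ => by rw [hanti b m d m c a, hef m b d m c a]; ring]; exact Finset.sum_neg_distrib _]
  have hc97 : (∑ m, η m * S d m b m c a) = -(∑ m, η m * S m d b m a c) := by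
    rw [show ∑ m, η m * S d m b m c a = -(∑ m, η m * S m d b m a c) from by rw [show ∑ m, η m * S d m b m c a = ∑ m, -(η m * S m d b m a c) from Finset.sum_congr rfl fun m _ => by rw [hanti d m b m c a, hef m d b m c a]; ring]; exact Finset.sum_neg_distrib _]
  have hr95 : (∑ i, η i * (S b i d i c a + S d i b i c a)) = -((∑ m, η m * S m b d m a c)) - (∑ m, η m * S m d b m a c) := by
    rw [show (∑ i, η i * (S b i d i c a + S d i b i c a)) = ∑ i, ((η i * S b i d i c a) + (η i * S d i b i c a)) from Finset.sum_congr rfl fun i _ => by ring]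
    simp only [Finset.sum_add_distrib, Finset.sum_sub_distrib, Finset.sum_neg_distrib, ← Finset.mul_sum]
    simp only [hc96, hc97]
    ring
  have hc98 : (∑ m, η m * S d c a m m b) = -(∑ m, η m * S c d a m m b) := by
    rw [show ∑ m, η m * S d c a m m b = -(∑ m, η m * S c d a m m b) from by rw [show ∑ m, η m * S d c a m m b = ∑ m, -(η m * S c d a m m b) from Finset.sum_congr rfl fun m _ => by rw [hanti d c a m m b]; ring]; exact Finset.sum_neg_distrib _]
  have hc99 : (∑ m, η m * S d c b m m a) = -(∑ m, η m * S c d b m m a) := by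
    rw [show ∑ m, η m * S d c b m m a = -(∑ m, η m * S c d b m m a) from by rw [show ∑ m, η m * S d c b m m a = ∑ m, -(η m * S c d b m m a) from Finset.sum_congr rfl fun m _ => by rw [hanti d c b m m a]; ring]; exact Finset.sum_neg_distrib _]
  have hc100 : (∑ m, η m * S a b m m d c) = (∑ m, η m * S a b m m c d) := by
    rw [show ∑ m, η m * S a b m m d c = ∑ m, η m * S a b m m c d from Finset.sum_congr rfl fun m _ => by rw [hef a b m m d c]]
  have hc101 : (∑ m, η m * S m a c m d b) = (∑ m, η m * S m a c m b d) := by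
    rw [show ∑ m, η m * S m a c m d b = ∑ m, η m * S m a c m b d from Finset.sum_congr rfl fun m _ => by rw [hef m a c m d b]]
  have hc102 : (∑ m, η m * S m a d m c b) = (∑ m, η m * S m a d m b c) := by
    rw [show ∑ m, η m * S m a d m c b = ∑ m, η m * S m a d m b c from Finset.sum_congr rfl fun m _ => by rw [hef m a d m c b]]
  have hc103 : (∑ m, η m * S m d a m c b) = (∑ m, η m * S m d a m b c) := by
    rw [show ∑ m, η m * S m d a m c b = ∑ m, η m * S m d a m b c from Finset.sum_congr rfl fun m _ => by rw [hef m d a m c b]]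
  have hc104 : (∑ m, η m * S m c a m d b) = (∑ m, η m * S m c a m b d) := by
    rw [show ∑ m, η m * S m c a m d b = ∑ m, η m * S m c a m b d from Finset.sum_congr rfl fun m _ => by rw [hef m c a m d b]]
  have hc105 : (∑ m, η m * S d c m m a b) = -(∑ m, η m * S c d m m a b) := by
    rw [show ∑ m, η m * S d c m m a b = -(∑ m, η m * S c d m m a b) from by rw [show ∑ m, η m * S d c m m a b = ∑ m, -(η m * S c d m m a b) from Finset.sum_congr rfl fun m _ => by rw [hanti d c m m a b]; ring]; exact Finset.sum_neg_distrib _]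
  have hc106 : (∑ m, η m * S b a c m m d) = -(∑ m, η m * S a b c m m d) := by
    rw [show ∑ m, η m * S b a c m m d = -(∑ m, η m * S a b c m m d) from by rw [show ∑ m, η m * S b a c m m d = ∑ m, -(η m * S a b c m m d) from Finset.sum_congr rfl fun m _ => by rw [hanti b a c m m d]; ring]; exact Finset.sum_neg_distrib _]
  have hc107 : (∑ m, η m * S b a d m m c) = -(∑ m, η m * S a b d m m c) := by
    rw [show ∑ m, η m * S b a d m m c = -(∑ m, η m * S a b d m m c) from by rw [show ∑ m, η m * S b a d m m c = ∑ m, -(η m * S a b d m m c) from Finset.sum_congr rfl fun m _ => by rw [hanti b a d m m c]; ring]; exact Finset.sum_neg_distrib _]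
  have hc108 : (∑ m, η m * S b a m m c d) = -(∑ m, η m * S a b m m c d) := by
    rw [show ∑ m, η m * S b a m m c d = -(∑ m, η m * S a b m m c d) from by rw [show ∑ m, η m * S b a m m c d = ∑ m, -(η m * S a b m m c d) from Finset.sum_congr rfl fun m _ => by rw [hanti b a m m c d]; ring]; exact Finset.sum_neg_distrib _]
  have hc109 : (∑ m, η m * S b a m m d c) = -(∑ m, η m * S a b m m c d) := by
    rw [show ∑ m, η m * S b a m m d c = -(∑ m, η m * S a b m m c d) from by rw [show ∑ m, η m * S b a m m d c = ∑ m, -(η m * S a b m m c d) from Finset.sum_congr rfl fun m _ => by rw [hanti b a m m d c, hef a b m m d c]; ring]; exact Finset.sum_neg_distrib _]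
  have hc110 : (∑ m, η m * S m b c m d a) = (∑ m, η m * S m b c m a d) := by
    rw [show ∑ m, η m * S m b c m d a = ∑ m, η m * S m b c m a d from Finset.sum_congr rfl fun m _ => by rw [hef m b c m d a]]
  have hc111 : (∑ m, η m * S m b d m c a) = (∑ m, η m * S m b d m a c) := by
    rw [show ∑ m, η m * S m b d m c a = ∑ m, η m * S m b d m a c from Finset.sum_congr rfl fun m _ => by rw [hef m b d m c a]]
  have hc112 : (∑ m, η m * S c d m m b a) = (∑ m, η m * S c d m m a b) := by
    rw [show ∑ m, η m * S c d m m b a = ∑ m, η m * S c d m m a b from Finset.sum_congr rfl fun m _ => by rw [hef c d m m b a]]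
  have hc113 : (∑ m, η m * S m d b m c a) = (∑ m, η m * S m d b m a c) := by
    rw [show ∑ m, η m * S m d b m c a = ∑ m, η m * S m d b m a c from Finset.sum_congr rfl fun m _ => by rw [hef m d b m c a]]
  have hc114 : (∑ m, η m * S m c b m d a) = (∑ m, η m * S m c b m a d) := by
    rw [show ∑ m, η m * S m c b m d a = ∑ m, η m * S m c b m a d from Finset.sum_congr rfl fun m _ => by rw [hef m c b m d a]]
  have hc115 : (∑ m, η m * S d c m m b a) = -(∑ m, η m * S c d m m a b) := by
    rw [show ∑ m, η m * S d c m m b a = -(∑ m, η m * S c d m m a b) from by rw [show ∑ m, η m * S d c m m b a = ∑ m, -(η m * S c d m m a b) from Finset.sum_congr rfl fun m _ => by rw [hanti d c m m b a, hef c d m m b a]; ring]; exact Finset.sum_neg_distrib _]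
  rw [show (∑ i, η i * asym33 (fun a b f c d e => Fm n η S a b c d e f) a b i c d i) = ∑ i, (((1/36 : ℝ)) * (η i * Fm n η S a b c d i i) - ((1/36 : ℝ)) * (η i * Fm n η S a b c i d i) - ((1/36 : ℝ)) * (η i * Fm n η S a b d c i i) + ((1/36 : ℝ)) * (η i * Fm n η S a b d i c i) + ((1/36 : ℝ)) * (η i * Fm n η S a b i c d i) - ((1/36 : ℝ)) * (η i * Fm n η S a b i d c i) - ((1/36 : ℝ)) * (η i * Fm n η S a i c d i b) + ((1/36 : ℝ)) * (η i * Fm n η S a i c i d b) + ((1/36 : ℝ)) * (η i * Fm n η S a i d c i b) - ((1/36 : ℝ)) * (η i * Fm n η S a i d i c b) - ((1/36 : ℝ)) * (η i * Fm n η S a i i c d b) + ((1/36 : ℝ)) * (η i * Fm n η S a i i d c b) - ((1/36 : ℝ)) * (η i * Fm n η S b a c d i i) + ((1/36 : ℝ)) * (η i * Fm n η S b a c i d i) + ((1/36 : ℝ)) * (η i * Fm n η S b a d c i i) - ((1/36 : ℝ)) * (η i * Fm n η S b a d i c i) - ((1/36 : ℝ)) * (η i * Fm n η S b a i c d i) +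 ((1/36 : ℝ)) * (η i * Fm n η S b a i d c i) + ((1/36 : ℝ)) * (η i * Fm n η S b i c d i a) - ((1/36 : ℝ)) * (η i * Fm n η S b i c i d a) - ((1/36 : ℝ)) * (η i * Fm n η S b i d c i a) + ((1/36 : ℝ)) * (η i * Fm n η S b i d i c a) + ((1/36 : ℝ)) * (η i * Fm n η S b i i c d a) - ((1/36 : ℝ)) * (η i * Fm n η S b i i d c a) + ((1/36 : ℝ)) * (η i * Fm n η S i a c d i b) - ((1/36 : ℝ)) * (η i * Fm n η S i a c i d b) - ((1/36 : ℝ)) * (η i * Fm n η S i a d c i b) + ((1/36 : ℝ)) * (η i * Fm n η S i a d i c b) + ((1/36 : ℝ)) * (η i * Fm n η S i a i c d b) - ((1/36 : ℝ)) * (η i * Fm n η S i a i d c b) - ((1/36 : ℝ)) * (η i * Fm n η S i b c d i a) + ((1/36 : ℝ)) * (η i * Fm n η S i b c i d a) + ((1/36 : ℝ)) * (η i * Fm n η S i b d c i a) - ((1/36 : ℝ)) * (η i * Fm n η S i b d i c a) - ((1/36 : ℝ)) * (η i * Fm n η S i b i c d a) + ((1/36 : ℝ)) * (η i * Fm n η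 S i b i d c a)) from Finset.sum_congr rfl fun i _ => by simp only [asym33, asym3]; ring]
  simp only [Finset.sum_add_distrib, Finset.sum_sub_distrib, Finset.sum_neg_distrib, ← Finset.mul_sum]
  rw [E65 a b c d, E64 a b c d, E65 a b d c, E64 a b d c, E63 a b c d, E63 a b d c, E25 a c d b, E24 a c d b, E25 a d c b, E24 a d c b, E23 a c d b, E23 a d c b, E65 b a c d, E64 b a c d, E65 b a d c, E64 b a d c, E63 b a c d, E63 b a d c, E25 b c d a, E24 b c d a, E25 b d c a, E24 b d c a, E23 b c d a, E23 b d c a, E15 a c d b, E14 a c d b, E15 a d c b, E14 a d c b, E13 a c d b, E13 a d c b, E15 b c d a, E14 b c d a, E15 b d c a, E14 b d c a, E13 b c d a, E13 b d c a]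
  simp only [asym22]
  rw [hr86, hr89, hr92, hr95]
  rw [EDD b d, EDD a d, EDD b c, EDD a c]
  simp only [hc100, hc101, hc102, hc103, hc104, hc105, hc106, hc107, hc108, hc109, hc110, hc111, hc112, hc113, hc114, hc115, hc98, hc99]
  have hge4 : (4:ℝ) ≤ (n:ℝ) := by exact_mod_cast hn
  have hne2 : ((n:ℝ) - 2) ≠ 0 := by intro h; linarith
  have hne3 : ((n:ℝ) - 3) ≠ 0 := by intro h; linarith
  field_simp
  ring

/-- **Single contraction of the integrability condition (equation (9), flat space).**
If `W` (`C²`, with the algebraic symmetries and vanishing trace) and `L` (`C³`,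
`L_{abc} = L_{[ab]c}`, `L_{ab}{}^b = 0`) satisfy equation (5) on flat `ℝⁿ` (`n ≥ 4`), then
`W^{[ab}{}_{[cd;i]}{}^{i]} = −(4(n−4)/(9(n−2))) ( L^{[a|i|}{}_{[c;|i|d]}{}^{b]}
 + L_{[c}{}^{i[a}{}_{;|i|d]}{}^{b]} ) − (4/(9(n−3))) δ^{[a}_{[c} W^{b]i}{}_{d]j;i}{}^{j}`. -/
theorem singly_contracted_integrability_condition
    (n : ℕ) (hn : 4 ≤ n) (η : Fin n → ℝ) (hη : ∀ i, η i = 1 ∨ η i = -1)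
    (W : (Fin n → ℝ) → Fin n → Fin n → Fin n → Fin n → ℝ)
    (hWC2 : ∀ a b c d, ContDiff ℝ 2 (fun x => W x a b c d))
    (hW1 : ∀ x a b c d, W x a b c d = - W x b a c d)
    (hW2 : ∀ x a b c d, W x a b c d = - W x a b d c)
    (hW3 : ∀ x a b c d, W x a b c d = W x c d a b)
    (hWtr : ∀ x b d, ∑ a, η a * W x a b a d = 0)
    (L : (Fin n → ℝ) → Fin n → Fin n → Fin n → ℝ)
    (hLC3 : ∀ a b c, ContDiff ℝ 3 (fun x => L x a b c))
    (hLasym : ∀ x a b c, L x a b c = - L x b a c)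
    (hgauge : ∀ x a, ∑ b, η b * L x a b b = 0)
    (hEq5 : Eq5 η W L) :
    ∀ x a b c d,
      -- W^{[ab}{}_{[cd;i]}{}^{i]}: antisymmetrize over the three upper slots (a,b,^i)
      -- and the three lower slots (c,d,;i), then contract the dummy pair i
      (∑ i, η i *
          asym33 (fun a b f c d e => pd f (pd e (W · a b c d)) x) a b i c d i) =
        -(4 * ((n : ℝ) - 4) / (9 * ((n : ℝ) - 2))) *
            asym22 (fun a b c d =>
              ∑ i, η i *
                (pd b (pd d (pd i (L · a i c))) x
                  + pd b (pd d (pd i (L · c i a))) x)) a b c d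
        - (4 / (9 * ((n : ℝ) - 3))) *
            asym22 (fun a b c d =>
              gm η a c *
                ∑ i, ∑ j, η i * η j * pd j (pd i (W · b i d j)) x) a b c d := by
  intro x a b c d
  have hanti : ∀ p q r s t u : Fin n,
      pd u (pd t (pd s (fun y => L y p q r))) x
        = - pd u (pd t (pd s (fun y => L y q p r))) x := by
    intro p q r s t u
    have h0 : (fun y => L y p q r) = fun y => -(L y q p r) := funext fun y => hLasym y p q r
    have h1 : pd s (fun y => L y p q r) = fun z => -(pd s (fun y => L y q p r) z) := by
      rw [h0]; exact funext fun z => pd_neg s _ z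
    have h2 : pd t (pd s (fun y => L y p q r))
        = fun z => -(pd t (pd s (fun y => L y q p r)) z) := by
      rw [h1]; exact funext fun z => pd_neg t _ z
    rw [h2]; exact pd_neg u _ x
  have hCL2 : ∀ p q r : Fin n, ContDiff ℝ 2 (fun y => L y p q r) := fun p q r =>
    (hLC3 p q r).of_le (by norm_num)
  have hde : ∀ p q r s t u : Fin n,
      pd u (pd t (pd s (fun y => L y p q r))) x
        = pd u (pd s (pd t (fun y => L y p q r))) x := by
    intro p q r s t u
    have h : pd t (pd s (fun y => L y p q r)) = pd s (pd t (fun y => L y p q r)) :=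
      funext fun z => pd_comm (hCL2 p q r) t s z
    rw [h]
  have hef : ∀ p q r s t u : Fin n,
      pd u (pd t (pd s (fun y => L y p q r))) x
        = pd t (pd u (pd s (fun y => L y p q r))) x := fun p q r s t u =>
    pd_comm (contDiff_pd_two (hLC3 p q r) s) u t x
  have htr3 : ∀ p s t u : Fin n,
      ∑ j, η j * pd u (pd t (pd s (fun y => L y p j j))) x = 0 := by
    intro p s t u
    have l1 : ∀ z, ∑ j, η j * pd s (fun y => L y p j j) z = 0 := fun z => by
      rw [← pd_sum_mul η s z (fun j => ((hLC3 p j j).differentiable (by norm_num)).differentiableAt)]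
      rw [show (fun y => ∑ j, η j * L y p j j) = fun _ => (0:ℝ) from funext fun y => hgauge y p]
      simp [pd]
    have l2 : ∀ z, ∑ j, η j * pd t (pd s (fun y => L y p j j)) z = 0 := fun z => by
      rw [← pd_sum_mul η t z (fun j =>
        ((contDiff_pd_two (hLC3 p j j) s).differentiable (by norm_num)).differentiableAt)]
      rw [show (fun y => ∑ j, η j * pd s (fun y' => L y' p j j) y) = fun _ => (0:ℝ) from
        funext fun y => l1 y]
      simp [pd]
    rw [← pd_sum_mul η u x (fun j =>
      ((contDiff_pd_one (contDiff_pd_two (hLC3 p j j) s) t).differentiable (by norm_num)).differentiableAt)]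
    rw [show (fun y => ∑ j, η j * pd t (pd s (fun y' => L y' p j j)) y) = fun _ => (0:ℝ) from
      funext fun y => l2 y]
    simp [pd]
  have hF : ∀ p q r s t u : Fin n,
      pd u (pd t (fun y => W y p q r s)) x
        = Fm n η (fun a b c d e f => pd f (pd e (pd d (fun y => L y a b c))) x) p q r s t u :=
    fun p q r s t u => W2nd η hLC3 hEq5 x p q r s t u
  simp only [hF]
  exact key n hn η hη (fun p q r s t u => pd u (pd t (pd s (fun y => L y p q r))) x)
    hanti hde hef htr3 a b c d
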